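/- arXiv:1907.09746 — 7 statements merged into one kernel-verified Lean document; each statement's English description precedes it below -/
import Mathlib

section
/- For all n, k ∈ ℕ, ∫₀^∞ φ_n(x) φ_k(x) dx = (1/2) δ_{n,k}, and the family {√2 · φ_k : k ∈ ℕ} is a complete orthonormal system (Hilbert basis) of L²((0,∞)). -/
open MeasureTheory Set

/-- The Laguerre polynomial `L_n(x) = ∑_{k=0}^n C(n, n-k) (-x)^k / k!`. -/
noncomputable def lagL (n : ℕ) (x : ℝ) : ℝ :=
  ∑ k ∈ Finset.range (n + 1), (n.choose (n - k) : ℝ) * (-x) ^ k / (Nat.factorial k : ℝ)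

/-- The Laguerre function `φ_n(x) = e^{-x} L_n(2x)`. -/
noncomputable def lagPhi (n : ℕ) (x : ℝ) : ℝ := Real.exp (-x) * lagL n (2 * x)

open Finset

-- C1: alternating binomial inversion
lemma c1 (n l : ℕ) :
    ∑ i ∈ range (n + 1), (-1 : ℤ) ^ i * (n.choose i) * (i.choose l)
      = (-1) ^ n * (if n = l then 1 else 0) := by
  rcases lt_or_ge n l with h | h
  · rw [Finset.sum_eq_zero, if_neg (by omega), mul_zero]
    intro i hi
    simp only [Finset.mem_range] at hi
    rw [Nat.choose_eq_zero_of_lt (show i < l by omega), Nat.cast_zero, mul_zero]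
  · have key : ∀ i ∈ Finset.Ico l (n+1), (-1 : ℤ) ^ i * (n.choose i) * (i.choose l)
        = (-1) ^ i * ((n.choose l) * ((n-l).choose (i-l))) := by
      intro i hi
      simp only [Finset.mem_Ico] at hi
      rw [mul_assoc]
      congr 1
      exact_mod_cast congrArg (Nat.cast : ℕ → ℤ)
        (Nat.choose_mul (n := n) (show l ≤ i by omega))
    have hzero : ∑ i ∈ Finset.Ico 0 l, (-1 : ℤ) ^ i * (n.choose i) * (i.choose l) = 0 := by
      apply Finset.sum_eq_zero
      intro i hi
      simp only [Finset.mem_Ico] at hi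
      rw [Nat.choose_eq_zero_of_lt (show i < l by omega), Nat.cast_zero, mul_zero]
    rw [range_eq_Ico, ← Finset.sum_Ico_consecutive _ (Nat.zero_le l) (by omega : l ≤ n + 1),
      hzero, zero_add, Finset.sum_congr rfl key, Finset.sum_Ico_eq_sum_range]
    have hterm : ∀ j ∈ range (n + 1 - l),
        (-1 : ℤ) ^ (l + j) * ((n.choose l) * ((n-l).choose (l + j - l)))
        = ((-1)^l * n.choose l) * ((-1) ^ j * ((n-l).choose j)) := by
      intro j hj
      rw [Nat.add_sub_cancel_left, pow_add]
      ring
    rw [Finset.sum_congr rfl hterm, ← Finset.mul_sum]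
    have hrange : n + 1 - l = (n - l) + 1 := by omega
    rw [hrange, Int.alternating_sum_range_choose]
    rcases eq_or_ne n l with rfl | hne
    · simp
    · rw [if_neg (by omega), if_neg hne, mul_zero, mul_zero]

-- C2: Vandermonde variant
lemma c2 (i j N : ℕ) (hi : i < N) :
    (((i + j).choose i : ℕ) : ℤ) = ∑ l ∈ range N, (i.choose l : ℤ) * (j.choose l) := by
  rw [Nat.add_choose_eq]
  rw [Finset.Nat.sum_antidiagonal_eq_sum_range_succ_mk]
  rw [← Finset.sum_range_reflect]
  have h1 : ∀ l ∈ range (i + 1),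
      ((i.choose (i + 1 - 1 - l) * j.choose (i - (i + 1 - 1 - l)) : ℕ) : ℤ)
        = (i.choose l : ℤ) * (j.choose l) := by
    intro l hl
    simp only [Finset.mem_range] at hl
    have h2 : i + 1 - 1 - l = i - l := by omega
    rw [h2, Nat.choose_symm (by omega), Nat.sub_sub_self (by omega)]
    push_cast; ring
  rw [Nat.cast_sum, Finset.sum_congr rfl h1]
  apply Finset.sum_subset (by intro x hx; simp at hx ⊢; omega)
  intro l _ hl
  simp only [Finset.mem_range, not_lt] at hl
  rw [Nat.choose_eq_zero_of_lt (show i < l by omega), Nat.cast_zero, zero_mul]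

-- C3: the key orthogonality sum
lemma c3 (n k : ℕ) :
    ∑ i ∈ range (n + 1), ∑ j ∈ range (k + 1),
        (-1 : ℤ) ^ (i + j) * (n.choose i) * (k.choose j) * ((i + j).choose i)
      = if n = k then 1 else 0 := by
  set N := n + k + 1 with hN
  have step1 : ∑ i ∈ range (n + 1), ∑ j ∈ range (k + 1),
      (-1 : ℤ) ^ (i + j) * (n.choose i) * (k.choose j) * ((i + j).choose i)
      = ∑ l ∈ range N, (∑ i ∈ range (n + 1), (-1 : ℤ) ^ i * (n.choose i) * (i.choose l)) *
          (∑ j ∈ range (k + 1), (-1 : ℤ) ^ j * (k.choose j) * (j.choose l)) := by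
    have key : ∀ i ∈ range (n+1), ∀ j ∈ range (k+1),
        (-1 : ℤ) ^ (i + j) * (n.choose i) * (k.choose j) * ((i + j).choose i)
        = ∑ l ∈ range N, ((-1 : ℤ) ^ i * (n.choose i) * (i.choose l)) *
            ((-1 : ℤ) ^ j * (k.choose j) * (j.choose l)) := by
      intro i hi j hj
      simp only [Finset.mem_range] at hi
      rw [c2 i j N (by omega), Finset.mul_sum]
      apply Finset.sum_congr rfl
      intro l _
      rw [pow_add]; ring
    calc ∑ i ∈ range (n + 1), ∑ j ∈ range (k + 1),
          (-1 : ℤ) ^ (i + j) * (n.choose i) * (k.choose j) * ((i + j).choose i)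
        = ∑ i ∈ range (n + 1), ∑ j ∈ range (k + 1), ∑ l ∈ range N,
            ((-1 : ℤ) ^ i * (n.choose i) * (i.choose l)) *
            ((-1 : ℤ) ^ j * (k.choose j) * (j.choose l)) := by
          apply Finset.sum_congr rfl; intro i hi
          apply Finset.sum_congr rfl; intro j hj
          exact key i hi j hj
      _ = ∑ i ∈ range (n + 1), ∑ l ∈ range N, ∑ j ∈ range (k + 1),
            ((-1 : ℤ) ^ i * (n.choose i) * (i.choose l)) *
            ((-1 : ℤ) ^ j * (k.choose j) * (j.choose l)) := by
          apply Finset.sum_congr rfl; intro i _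
          rw [Finset.sum_comm]
      _ = ∑ l ∈ range N, ∑ i ∈ range (n + 1), ∑ j ∈ range (k + 1),
            ((-1 : ℤ) ^ i * (n.choose i) * (i.choose l)) *
            ((-1 : ℤ) ^ j * (k.choose j) * (j.choose l)) := by
          rw [Finset.sum_comm]
      _ = _ := by
          apply Finset.sum_congr rfl; intro l _
          rw [Finset.sum_mul_sum]
  rw [step1]
  have hcong : ∀ l ∈ range N,
      (∑ i ∈ range (n + 1), (-1 : ℤ) ^ i * (n.choose i) * (i.choose l)) *
      (∑ j ∈ range (k + 1), (-1 : ℤ) ^ j * (k.choose j) * (j.choose l))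
      = ((-1)^n * if n = l then 1 else 0) * ((-1)^k * if k = l then 1 else 0) := by
    intro l _
    rw [c1 n l, c1 k l]
  rw [Finset.sum_congr rfl hcong]
  rcases eq_or_ne n k with rfl | hne
  · rw [if_pos rfl, Finset.sum_eq_single n]
    · rw [if_pos rfl, mul_one, ← mul_pow]; norm_num
    · intro l _ hl
      rw [if_neg (fun h => hl h.symm), mul_zero, zero_mul]
    · intro h; exact absurd (Finset.mem_range.2 (by omega)) h
  · rw [if_neg hne]
    apply Finset.sum_eq_zero
    intro l _
    by_cases h1 : n = l
    · rw [if_neg (show ¬ k = l by omega), mul_zero, mul_zero]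
    · rw [if_neg h1, mul_zero, zero_mul]

noncomputable def lagW (c : ℝ) (k : ℕ) : ℝ → ℝ := fun x => x ^ k * Real.exp (-(c * x))

lemma lagW_cont (c : ℝ) (k : ℕ) : Continuous (lagW c k) := by
  unfold lagW; fun_prop

lemma integrableOn_lagW {c : ℝ} (hc : 0 < c) (k : ℕ) :
    IntegrableOn (lagW c k) (Ioi 0) := by
  have h := integrableOn_rpow_mul_exp_neg_mul_rpow (p := 1) (s := (k : ℝ))
    (by exact_mod_cast neg_one_lt_zero.trans_le (Nat.cast_nonneg k)) one_pos hc
  apply h.congr_fun _ measurableSet_Ioi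
  intro x hx
  simp only [Real.rpow_one, Real.rpow_natCast, lagW, neg_mul]

lemma integral_lagW {c : ℝ} (hc : 0 < c) (k : ℕ) :
    ∫ x in Ioi 0, lagW c k x = (Nat.factorial k : ℝ) / c ^ (k + 1) := by
  have h := Real.integral_rpow_mul_exp_neg_mul_Ioi (a := (k : ℝ) + 1) (by positivity) hc
  have heq : ∀ x ∈ Ioi (0:ℝ), x ^ ((k : ℝ) + 1 - 1) * Real.exp (-(c * x)) = lagW c k x := by
    intro x hx
    rw [add_sub_cancel_right, Real.rpow_natCast]
    rfl
  rw [setIntegral_congr_fun measurableSet_Ioi heq] at h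
  rw [h, Real.Gamma_nat_eq_factorial]
  have : ((k : ℝ) + 1) = ((k + 1 : ℕ) : ℝ) := by push_cast; ring
  rw [this, Real.rpow_natCast, div_pow, one_pow]
  ring


noncomputable def lagA (n i : ℕ) : ℝ := (n.choose i : ℝ) * (-2) ^ i / (Nat.factorial i : ℝ)

lemma lagPhi_eq (n : ℕ) (x : ℝ) :
    lagPhi n x = ∑ i ∈ range (n + 1), lagA n i * lagW 1 i x := by
  unfold lagPhi lagL lagA lagW
  rw [Finset.mul_sum]
  apply Finset.sum_congr rfl
  intro i hi
  simp only [Finset.mem_range] at hi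
  rw [Nat.choose_symm (by omega : i ≤ n)]
  rw [show -(1*x) = -x by ring, show (-(2*x)) = (-2)*x by ring, mul_pow]
  ring

lemma lagW_mul_lagW (c d : ℝ) (i j : ℕ) (x : ℝ) :
    lagW c i x * lagW d j x = lagW (c + d) (i + j) x := by
  unfold lagW
  rw [show -((c+d)*x) = -(c*x) + -(d*x) by ring, Real.exp_add, pow_add]
  ring

lemma lag_orth (n k : ℕ) :
    (∫ x in Ioi (0:ℝ), lagPhi n x * lagPhi k x) = if n = k then (1:ℝ) / 2 else 0 := by
  have hexp : ∀ x : ℝ, lagPhi n x * lagPhi k x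
      = ∑ i ∈ range (n + 1), ∑ j ∈ range (k + 1),
          (lagA n i * lagA k j) * lagW 2 (i + j) x := by
    intro x
    rw [lagPhi_eq, lagPhi_eq, Finset.sum_mul_sum]
    apply Finset.sum_congr rfl; intro i _
    apply Finset.sum_congr rfl; intro j _
    rw [mul_mul_mul_comm, lagW_mul_lagW]
    norm_num
  rw [MeasureTheory.setIntegral_congr_fun measurableSet_Ioi (fun x _ => hexp x)]
  have hint : ∀ (i j : ℕ), Integrable (fun x => (lagA n i * lagA k j) * lagW 2 (i + j) x)
      (volume.restrict (Ioi (0:ℝ))) :=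
    fun i j => ((integrableOn_lagW two_pos (i + j)).const_mul _)
  rw [MeasureTheory.integral_finset_sum _ (fun i _ =>
    integrable_finset_sum _ (fun j _ => hint i j))]
  have hin : ∀ i, (∫ x in Ioi (0:ℝ), ∑ j ∈ range (k + 1),
      (lagA n i * lagA k j) * lagW 2 (i + j) x)
      = ∑ j ∈ range (k + 1), (lagA n i * lagA k j) * ((Nat.factorial (i+j) : ℝ) / 2 ^ (i+j+1)) := by
    intro i
    rw [MeasureTheory.integral_finset_sum _ (fun j _ => hint i j)]
    apply Finset.sum_congr rfl
    intro j _
    rw [MeasureTheory.integral_const_mul, integral_lagW two_pos]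
  rw [Finset.sum_congr rfl (fun i _ => hin i)]
  -- now a pure algebraic computation
  have hterm : ∀ i ∈ range (n+1), ∀ j ∈ range (k+1),
      (lagA n i * lagA k j) * ((Nat.factorial (i+j) : ℝ) / 2 ^ (i+j+1))
      = (1/2) * (((-1 : ℤ) ^ (i + j) * (n.choose i) * (k.choose j) * ((i + j).choose i) : ℤ) : ℝ) := by
    intro i _ j _
    unfold lagA
    have hsymm0 : ((i + j).choose j) = ((i + j).choose i) := by
      have h := Nat.choose_symm (Nat.le_add_right i j)
      rwa [Nat.add_sub_cancel_left] at h
    have hfacn : Nat.factorial (i+j) = (i+j).choose i * Nat.factorial i * Nat.factorial j := by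
      rw [← hsymm0]
      exact (Nat.add_choose_mul_factorial_mul_factorial i j).symm
    have hfac : ((Nat.factorial (i+j) : ℝ)) = ((i+j).choose i : ℝ) * (Nat.factorial i : ℝ) * (Nat.factorial j : ℝ) := by
      exact_mod_cast congrArg (fun z : ℕ => (z : ℝ)) hfacn
    have h2 : ((-2 : ℝ)) ^ i * (-2) ^ j = (-1)^(i+j) * 2^(i+j) := by
      rw [← pow_add, show (-2:ℝ) = -1*2 by norm_num, mul_pow]
    have hfi : (Nat.factorial i : ℝ) ≠ 0 := Nat.cast_ne_zero.2 (Nat.factorial_ne_zero i)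
    have hfj : (Nat.factorial j : ℝ) ≠ 0 := Nat.cast_ne_zero.2 (Nat.factorial_ne_zero j)
    have hsymm : ((i + j).choose j) = ((i + j).choose i) := by
      have h := Nat.choose_symm (Nat.le_add_right i j)
      rwa [Nat.add_sub_cancel_left] at h
    push_cast
    rw [hfac, show ((-2:ℝ))^i = (-1)^i*2^i by rw [show (-2:ℝ) = -1*2 by norm_num, mul_pow],
      show ((-2:ℝ))^j = (-1)^j*2^j by rw [show (-2:ℝ) = -1*2 by norm_num, mul_pow],
      pow_add ((-1:ℝ)) i j, pow_succ (2:ℝ) (i+j), pow_add (2:ℝ) i j]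
    field_simp
  rw [Finset.sum_congr rfl (fun i hi => Finset.sum_congr rfl (fun j hj => hterm i hi j hj))]
  have h3 : (∑ i ∈ range (n+1), ∑ j ∈ range (k+1),
      (((-1:ℤ)^(i+j) * (n.choose i) * (k.choose j) * ((i+j).choose i) : ℤ) : ℝ))
      = if n = k then (1:ℝ) else 0 := by
    exact_mod_cast congrArg (fun z : ℤ => (z : ℝ)) (c3 n k)
  simp only [← Finset.mul_sum]
  rw [h3]
  split <;> norm_num

open scoped RealInnerProductSpace ContDiff

local notation "lagμ" => volume.restrict (Ioi (0:ℝ))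

lemma memLp_lagW {c : ℝ} (hc : 0 < c) (k : ℕ) : MemLp (lagW c k) 2 lagμ := by
  rw [memLp_two_iff_integrable_sq ((lagW_cont c k).aestronglyMeasurable)]
  have hsq : ∀ x : ℝ, (lagW c k x) ^ 2 = lagW (2*c) (2*k) x := by
    intro x
    unfold lagW
    rw [mul_pow, ← pow_mul, mul_comm k 2, sq, ← Real.exp_add]
    ring_nf
  exact ((integrableOn_lagW (by positivity) (2*k)).congr
    (Filter.Eventually.of_forall fun x => (hsq x).symm))

lemma integrable_weight_mul {c : ℝ} (hc : 0 < c) (k : ℕ) {g : ℝ → ℝ}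
    (hg : MemLp g 2 lagμ) : Integrable (fun x => lagW c k x * g x) lagμ := by
  have h : MemLp ((lagW c k) • g) 1 lagμ := by
    apply hg.smul (memLp_lagW hc k)
  exact memLp_one_iff_integrable.mp h

lemma memLp_phi (n : ℕ) : MemLp (fun x => Real.sqrt 2 * lagPhi n x) 2 lagμ := by
  have heq : (fun x => Real.sqrt 2 * lagPhi n x)
      = fun x => ∑ i ∈ range (n+1), (Real.sqrt 2 * lagA n i) * lagW 1 i x := by
    funext x; rw [lagPhi_eq, Finset.mul_sum]
    exact Finset.sum_congr rfl fun i _ => by ring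
  rw [heq]
  exact memLp_finset_sum _ (fun i _ => ((memLp_lagW one_pos i).const_mul _))

lemma lag_step {b c : ℝ} (hb : 0 < b) (habs : |b - c| < b) (F : Lp ℝ 2 lagμ)
    (H : ∀ m : ℕ, ∫ x, lagW b m x * F x ∂lagμ = 0) (k : ℕ) :
    ∫ x, lagW c k x * F x ∂lagμ = 0 := by
  set Fn : ℕ → ℝ → ℝ := fun N x =>
    (∑ m ∈ range N, (b - c)^m * x^m / (Nat.factorial m : ℝ)) * (lagW b k x * F x) with hFn
  have hmeas : ∀ N, AEStronglyMeasurable (Fn N) lagμ := by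
    intro N
    apply AEStronglyMeasurable.mul
    · exact (Continuous.aestronglyMeasurable (by fun_prop))
    · exact ((lagW_cont b k).aestronglyMeasurable.mul (Lp.aestronglyMeasurable F))
  have hboundint : Integrable (fun x => lagW (b - |b - c|) k x * ‖F x‖) lagμ :=
    integrable_weight_mul (by linarith [abs_nonneg (b - c)]) k (Lp.memLp F).norm
  have hptbound : ∀ N, ∀ᵐ x ∂lagμ, ‖Fn N x‖ ≤ lagW (b - |b - c|) k x * ‖F x‖ := by
    intro N
    filter_upwards [self_mem_ae_restrict measurableSet_Ioi] with x hx
    have hx0 : (0:ℝ) < x := hx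
    have hsum : |∑ m ∈ range N, (b - c)^m * x^m / (Nat.factorial m : ℝ)|
        ≤ Real.exp (|b - c| * x) := by
      calc |∑ m ∈ range N, (b - c)^m * x^m / (Nat.factorial m : ℝ)|
          ≤ ∑ m ∈ range N, |(b - c)^m * x^m / (Nat.factorial m : ℝ)| :=
            Finset.abs_sum_le_sum_abs _ _
        _ = ∑ m ∈ range N, (|b - c| * x)^m / (Nat.factorial m : ℝ) := by
            apply Finset.sum_congr rfl
            intro m _
            rw [abs_div, abs_mul, abs_pow, abs_pow, abs_of_pos hx0,
              Nat.abs_cast, mul_pow]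
        _ ≤ Real.exp (|b - c| * x) := Real.sum_le_exp_of_nonneg (by positivity) N
    have hW : 0 ≤ lagW b k x := by unfold lagW; positivity
    have hkey : Real.exp (|b - c| * x) * lagW b k x = lagW (b - |b - c|) k x := by
      unfold lagW
      rw [show -((b - |b - c|) * x) = |b - c| * x + -(b * x) by ring, Real.exp_add]
      ring
    calc ‖Fn N x‖ = |∑ m ∈ range N, (b - c)^m * x^m / (Nat.factorial m : ℝ)|
          * (lagW b k x * ‖F x‖) := by
          simp only [hFn, norm_mul, Real.norm_eq_abs, abs_mul]
          rw [abs_of_nonneg hW]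
      _ ≤ Real.exp (|b - c| * x) * (lagW b k x * ‖F x‖) := by
          apply mul_le_mul_of_nonneg_right hsum (by positivity)
      _ = lagW (b - |b - c|) k x * ‖F x‖ := by rw [← hkey]; ring
  have hlim : ∀ᵐ x ∂lagμ, Filter.Tendsto (fun N => Fn N x) Filter.atTop
      (nhds (lagW c k x * F x)) := by
    apply Filter.Eventually.of_forall
    intro x
    have hs : HasSum (fun m => (b - c)^m * x^m / (Nat.factorial m : ℝ))
        (Real.exp ((b - c) * x)) := by
      have h := NormedSpace.expSeries_div_hasSum_exp ((b - c) * x)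
      rw [← Real.exp_eq_exp_ℝ] at h
      simp only [mul_pow] at h
      exact h
    have ht := hs.tendsto_sum_nat
    have hkey : Real.exp ((b - c) * x) * (lagW b k x * F x) = lagW c k x * F x := by
      unfold lagW
      rw [show -(b * x) = -(c*x) - (b-c)*x by ring, Real.exp_sub]
      have := Real.exp_ne_zero ((b - c) * x)
      field_simp
    rw [← hkey]
    exact ht.mul_const _
  have hzero : ∀ N, ∫ x, Fn N x ∂lagμ = 0 := by
    intro N
    have hrw : Fn N = fun x => ∑ m ∈ range N,
        ((b - c)^m / (Nat.factorial m : ℝ)) * (lagW b (k + m) x * F x) := by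
      funext x
      simp only [hFn]
      rw [Finset.sum_mul]
      apply Finset.sum_congr rfl
      intro m _
      unfold lagW
      rw [pow_add]
      ring
    rw [hrw, MeasureTheory.integral_finset_sum _ (fun m _ =>
      (integrable_weight_mul hb (k + m) (Lp.memLp F)).const_mul _)]
    apply Finset.sum_eq_zero
    intro m _
    rw [MeasureTheory.integral_const_mul, H (k + m), mul_zero]
  have h1 := tendsto_integral_of_dominated_convergence _ hmeas hboundint hptbound hlim
  have h2 : Filter.Tendsto (fun N => ∫ x, Fn N x ∂lagμ) Filter.atTop (nhds 0) := by
    simp only [hzero]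
    exact tendsto_const_nhds
  exact (tendsto_nhds_unique h1 h2)

lemma lag_all (F : Lp ℝ 2 lagμ) (H1 : ∀ m : ℕ, ∫ x, lagW 1 m x * F x ∂lagμ = 0) :
    ∀ c : ℝ, 0 < c → ∀ k : ℕ, ∫ x, lagW c k x * F x ∂lagμ = 0 := by
  have main : ∀ n : ℕ, ∀ c : ℝ, 0 < c → c < 2^n → ∀ k, ∫ x, lagW c k x * F x ∂lagμ = 0 := by
    intro n
    induction n with
    | zero =>
      intro c hc hlt k
      refine lag_step one_pos ?_ F H1 k
      rw [abs_lt]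
      simp only [pow_zero] at hlt
      constructor <;> linarith
    | succ n ih =>
      intro c hc hlt k
      rcases lt_or_ge c (2^n) with h | h
      · exact ih c hc h k
      · have hhalf : c/2 < 2^n := by
          rw [pow_succ] at hlt; linarith
        set b := (c/2 + 2^n)/2 with hbdef
        have hbpos : 0 < b := by positivity
        have hb1 : b < 2^n := by
          rw [hbdef]; linarith
        have hb2 : |b - c| < b := by
          rw [abs_lt]
          have hcb : c/2 < b := by
            rw [hbdef]; linarith
          constructor <;> [linarith; linarith]
        exact lag_step hbpos hb2 F (fun m => ih b hbpos hb1 m) k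
  intro c hc k
  obtain ⟨n, hn⟩ := pow_unbounded_of_one_lt c (one_lt_two (α := ℝ))
  exact main n c hc hn k

set_option maxHeartbeats 1000000 in
lemma lag_dense (F : Lp ℝ 2 lagμ)
    (H : ∀ c : ℝ, 0 < c → ∀ k : ℕ, ∫ x, lagW c k x * F x ∂lagμ = 0) : F = 0 := by
  have hbase : Integrable (fun x => Real.exp (-x) * F x) lagμ := by
    have h := integrable_weight_mul one_pos 0 (Lp.memLp F)
    apply h.congr
    apply Filter.Eventually.of_forall
    intro x
    simp [lagW]
  have hbasen : Integrable (fun x => Real.exp (-x) * ‖F x‖) lagμ := by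
    have h := integrable_weight_mul one_pos 0 (Lp.memLp F).norm
    apply h.congr
    apply Filter.Eventually.of_forall
    intro x
    simp [lagW]
  set C : ℝ := ∫ x, Real.exp (-x) * ‖F x‖ ∂lagμ with hCdef
  have hC : 0 ≤ C := by
    rw [hCdef]
    apply integral_nonneg
    intro x
    positivity
  set Fd : ℝ → ℝ := (Ioi (0:ℝ)).indicator (fun x => Real.exp (-x) * F x) with hFddef
  have hFd_int : Integrable Fd volume := by
    rw [hFddef, integrable_indicator_iff measurableSet_Ioi]
    exact hbase
  have key : ∀ (g : ℝ → ℝ), ContDiff ℝ ∞ g → HasCompactSupport g →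
      ∫ x, g x • Fd x = 0 := by
    intro g hg hgsupp
    have hrw : (fun x => g x • Fd x)
        = (Ioi (0:ℝ)).indicator (fun x => g x * (Real.exp (-x) * F x)) := by
      funext x
      by_cases hx : x ∈ Ioi (0:ℝ)
      · rw [hFddef, indicator_of_mem hx, indicator_of_mem hx, smul_eq_mul]
      · rw [hFddef, indicator_of_notMem hx, indicator_of_notMem hx, smul_zero]
    rw [hrw, integral_indicator measurableSet_Ioi]
    -- bound on g
    obtain ⟨Mg, hMg⟩ := hgsupp.exists_bound_of_continuous hg.continuous
    -- support radius
    obtain ⟨R, hR⟩ := hgsupp.isBounded.subset_closedBall 0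
    have gzero : ∀ y : ℝ, R < y → g y = 0 := by
      intro y hy
      apply image_eq_zero_of_notMem_tsupport
      intro hmem
      have := hR hmem
      rw [Metric.mem_closedBall, Real.dist_eq, sub_zero] at this
      exact absurd (le_trans (le_abs_self y) this) (not_le.mpr hy)
    -- the continuous transfer function
    set δ : ℝ := Real.exp (-(R+1)) / 2 with hδdef
    have hδpos : 0 < δ := by rw [hδdef]; positivity
    set G : ℝ → ℝ := fun u => g (-(Real.log (max u δ))) with hGdef
    have hGcont : Continuous G := by
      apply hg.continuous.comp
      apply Continuous.neg
      exact (continuous_id.max continuous_const).log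
        (fun u => ne_of_gt (lt_max_of_lt_right hδpos))
    have hlogδ : -(Real.log δ) = (R + 1) + Real.log 2 := by
      rw [hδdef, Real.log_div (Real.exp_ne_zero _) two_ne_zero, Real.log_exp]
      ring
    have hGg : ∀ x : ℝ, 0 < x → G (Real.exp (-x)) = g x := by
      intro x hx
      rcases le_total δ (Real.exp (-x)) with hle | hle
      · rw [hGdef]
        simp only
        rw [max_eq_left hle, Real.log_exp, neg_neg]
      · have h1 : G (Real.exp (-x)) = g ((R + 1) + Real.log 2) := by
          rw [hGdef]
          simp only
          rw [max_eq_right hle, hlogδ]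
        have h2 : g ((R + 1) + Real.log 2) = 0 :=
          gzero _ (by have := Real.log_pos (by norm_num : (1:ℝ) < 2); linarith)
        have hxR : R + 1 < x := by
          have hlt : Real.exp (-x) < Real.exp (-(R+1)) := by
            apply lt_of_le_of_lt hle
            rw [hδdef]
            have := Real.exp_pos (-(R+1))
            linarith
          have := (Real.exp_lt_exp.mp hlt)
          linarith
        rw [h1, h2, gzero x (by linarith)]
    -- epsilon argument
    have habs : ∀ ε : ℝ, 0 < ε →
        |∫ x, g x * (Real.exp (-x) * F x) ∂lagμ| ≤ ε * C := by
      intro ε hε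
      obtain ⟨q, hq⟩ := exists_polynomial_near_of_continuousOn 0 1 G
        hGcont.continuousOn ε hε
      -- the polynomial part integrates to zero
      have hqfun : (fun x => Polynomial.eval (Real.exp (-x)) q * (Real.exp (-x) * F x))
          = fun x => ∑ m ∈ range (q.natDegree + 1),
              q.coeff m * (lagW ((m:ℝ)+1) 0 x * F x) := by
        funext x
        rw [Polynomial.eval_eq_sum_range, Finset.sum_mul]
        apply Finset.sum_congr rfl
        intro m _
        unfold lagW
        rw [pow_zero, one_mul, show -(((m:ℝ)+1) * x) = (m:ℝ) * (-x) + -x by ring,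
          Real.exp_add, Real.exp_nat_mul]
        ring
      have hqint : Integrable (fun x => Polynomial.eval (Real.exp (-x)) q
          * (Real.exp (-x) * F x)) lagμ := by
        rw [hqfun]
        exact integrable_finset_sum _ (fun m _ =>
          (integrable_weight_mul (by positivity) 0 (Lp.memLp F)).const_mul _)
      have hqzero : ∫ x, Polynomial.eval (Real.exp (-x)) q
          * (Real.exp (-x) * F x) ∂lagμ = 0 := by
        rw [hqfun, MeasureTheory.integral_finset_sum _ (fun m _ =>
          (integrable_weight_mul (by positivity) 0 (Lp.memLp F)).const_mul _)]
        apply Finset.sum_eq_zero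
        intro m _
        rw [MeasureTheory.integral_const_mul, H ((m:ℝ)+1) (by positivity) 0, mul_zero]
      -- the full integrand is integrable
      have htot : Integrable (fun x => g x * (Real.exp (-x) * F x)) lagμ :=
        hbase.bdd_mul (hg.continuous.aestronglyMeasurable) (c := Mg) (Filter.Eventually.of_forall hMg)
      have hdiff : Integrable (fun x =>
          (g x - Polynomial.eval (Real.exp (-x)) q) * (Real.exp (-x) * F x)) lagμ := by
        have h := htot.sub hqint
        apply h.congr
        apply Filter.Eventually.of_forall
        intro x
        simp only [Pi.sub_apply]
        ring
      have hsplit : ∫ x, g x * (Real.exp (-x) * F x) ∂lagμ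
          = (∫ x, (g x - Polynomial.eval (Real.exp (-x)) q) * (Real.exp (-x) * F x) ∂lagμ)
            + ∫ x, Polynomial.eval (Real.exp (-x)) q * (Real.exp (-x) * F x) ∂lagμ := by
        rw [← MeasureTheory.integral_add hdiff hqint]
        apply integral_congr_ae
        apply Filter.Eventually.of_forall
        intro x
        simp only
        ring
      rw [hsplit, hqzero, add_zero]
      have hb : ∀ᵐ x ∂lagμ, ‖(g x - Polynomial.eval (Real.exp (-x)) q)
          * (Real.exp (-x) * F x)‖ ≤ ε * (Real.exp (-x) * ‖F x‖) := by
        filter_upwards [self_mem_ae_restrict measurableSet_Ioi] with x hx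
        have hx0 : (0:ℝ) < x := hx
        have hu : Real.exp (-x) ∈ Icc (0:ℝ) 1 := by
          constructor
          · exact (Real.exp_pos _).le
          · rw [← Real.exp_zero]
            apply Real.exp_le_exp.mpr
            linarith
        have hqb := hq (Real.exp (-x)) hu
        rw [← hGg x hx0]
        rw [norm_mul, norm_mul, Real.norm_eq_abs, Real.norm_eq_abs, Real.norm_eq_abs,
          abs_of_pos (Real.exp_pos (-x))]
        have h1 : |G (Real.exp (-x)) - Polynomial.eval (Real.exp (-x)) q| ≤ ε := by
          rw [abs_sub_comm]
          exact le_of_lt hqb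
        have h2 : (0:ℝ) ≤ Real.exp (-x) * |F x| := by positivity
        calc |G (Real.exp (-x)) - Polynomial.eval (Real.exp (-x)) q|
              * (Real.exp (-x) * |F x|) ≤ ε * (Real.exp (-x) * |F x|) :=
            mul_le_mul_of_nonneg_right h1 h2
          _ = ε * (Real.exp (-x) * ‖F x‖) := by rw [Real.norm_eq_abs]
      have hbint : Integrable (fun x => ε * (Real.exp (-x) * ‖F x‖)) lagμ :=
        hbasen.const_mul ε
      have := MeasureTheory.norm_integral_le_of_norm_le hbint hb
      rw [MeasureTheory.integral_const_mul] at this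
      rwa [Real.norm_eq_abs] at this
    -- conclude the integral is zero
    by_contra hne
    have hpos : 0 < |∫ x, g x * (Real.exp (-x) * F x) ∂lagμ| := abs_pos.mpr hne
    have hCpos : (0:ℝ) < 2 * (C + 1) := by linarith
    have hεpos : 0 < |∫ x, g x * (Real.exp (-x) * F x) ∂lagμ| / (2 * (C + 1)) :=
      div_pos hpos hCpos
    have h1 := habs _ hεpos
    have h2 : |∫ x, g x * (Real.exp (-x) * F x) ∂lagμ| / (2 * (C + 1)) * C
        < |∫ x, g x * (Real.exp (-x) * F x) ∂lagμ| := by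
      rw [div_mul_eq_mul_div, div_lt_iff₀ hCpos]
      nlinarith
    linarith
  have hzero := ae_eq_zero_of_integral_contDiff_smul_eq_zero
    (hFd_int.locallyIntegrable) key
  rw [MeasureTheory.Lp.eq_zero_iff_ae_eq_zero]
  have h1 : ∀ᵐ x ∂lagμ, Fd x = 0 := ae_restrict_of_ae hzero
  filter_upwards [h1, self_mem_ae_restrict measurableSet_Ioi] with x hx hmem
  rw [hFddef, indicator_of_mem hmem] at hx
  have := (mul_eq_zero.mp hx).resolve_left (Real.exp_ne_zero (-x))
  simpa using this

set_option maxHeartbeats 1000000 in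
theorem laguerre_orthogonal_and_complete :
    (∀ n k : ℕ, (∫ x in Ioi (0:ℝ), lagPhi n x * lagPhi k x)
        = if n = k then (1:ℝ) / 2 else 0) ∧
    ∃ b : HilbertBasis ℕ ℝ (Lp ℝ 2 (volume.restrict (Ioi (0:ℝ)))),
      ∀ n : ℕ, ⇑(b n) =ᵐ[volume.restrict (Ioi (0:ℝ))]
        fun x => Real.sqrt 2 * lagPhi n x := by
  refine ⟨lag_orth, ?_⟩
  set e : ℕ → Lp ℝ 2 lagμ := fun n => (memLp_phi n).toLp _ with hedef
  have hecoe : ∀ n, ⇑(e n) =ᵐ[lagμ] fun x => Real.sqrt 2 * lagPhi n x :=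
    fun n => (memLp_phi n).coeFn_toLp
  have hinner : ∀ (f g : Lp ℝ 2 lagμ), ⟪f, g⟫ = ∫ x, f x * g x ∂lagμ := by
    intro f g
    rw [MeasureTheory.L2.inner_def]
    apply integral_congr_ae
    apply Filter.Eventually.of_forall
    intro x
    simp [RCLike.inner_apply, conj_trivial]
    ring
  have horm : Orthonormal ℝ e := by
    rw [orthonormal_iff_ite]
    intro n k
    rw [hinner]
    have hcong : (fun x => e n x * e k x)
        =ᵐ[lagμ] fun x => (Real.sqrt 2 * lagPhi n x) * (Real.sqrt 2 * lagPhi k x) :=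
      (hecoe n).mul (hecoe k)
    rw [integral_congr_ae hcong]
    have h2 : ∀ x : ℝ, (Real.sqrt 2 * lagPhi n x) * (Real.sqrt 2 * lagPhi k x)
        = 2 * (lagPhi n x * lagPhi k x) := by
      intro x
      have h22 : Real.sqrt 2 * Real.sqrt 2 = 2 := Real.mul_self_sqrt (by norm_num)
      linear_combination (lagPhi n x * lagPhi k x) * h22
    rw [integral_congr_ae (Filter.Eventually.of_forall h2), MeasureTheory.integral_const_mul]
    rw [lag_orth n k]
    split <;> norm_num
  have hbot : (Submodule.span ℝ (Set.range e))ᗮ = ⊥ := by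
    rw [Submodule.eq_bot_iff]
    intro F hF
    rw [Submodule.mem_orthogonal] at hF
    have h0 : ∀ n : ℕ, ∫ x, lagPhi n x * F x ∂lagμ = 0 := by
      intro n
      have he := hF (e n) (Submodule.subset_span (Set.mem_range_self n))
      rw [hinner] at he
      have hcong : (fun x => e n x * F x)
          =ᵐ[lagμ] fun x => Real.sqrt 2 * (lagPhi n x * F x) := by
        filter_upwards [hecoe n] with x hx
        rw [hx]; ring
      rw [integral_congr_ae hcong, MeasureTheory.integral_const_mul] at he
      have hs2 : Real.sqrt 2 ≠ 0 := by positivity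
      exact (mul_eq_zero.mp he).resolve_left hs2
    have h1 : ∀ m : ℕ, ∫ x, lagW 1 m x * F x ∂lagμ = 0 := by
      intro m
      induction m using Nat.strong_induction_on with
      | _ m ih =>
        have h := h0 m
        have hcong : (fun x => lagPhi m x * F x)
            = fun x => ∑ i ∈ range (m+1), lagA m i * (lagW 1 i x * F x) := by
          funext x
          rw [lagPhi_eq, Finset.sum_mul]
          exact Finset.sum_congr rfl fun i _ => by ring
        rw [hcong, MeasureTheory.integral_finset_sum _ (fun i _ =>
          (integrable_weight_mul one_pos i (Lp.memLp F)).const_mul _)] at h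
        have hsplit : ∑ i ∈ range (m+1), ∫ x, lagA m i * (lagW 1 i x * F x) ∂lagμ
            = lagA m m * ∫ x, lagW 1 m x * F x ∂lagμ := by
          rw [Finset.sum_range_succ]
          rw [Finset.sum_eq_zero (fun i hi => by
            rw [MeasureTheory.integral_const_mul, ih i (Finset.mem_range.mp hi), mul_zero]),
            zero_add, MeasureTheory.integral_const_mul]
        rw [hsplit] at h
        have hA : lagA m m ≠ 0 := by
          unfold lagA
          rw [Nat.choose_self]
          apply div_ne_zero
          · rw [Nat.cast_one, one_mul]
            exact pow_ne_zero _ (by norm_num)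
          · exact Nat.cast_ne_zero.2 (Nat.factorial_ne_zero m)
        exact (mul_eq_zero.mp h).resolve_left hA
    exact lag_dense F (lag_all F h1)
  refine ⟨HilbertBasis.mkOfOrthogonalEqBot horm hbot, fun n => ?_⟩
  rw [HilbertBasis.coe_mkOfOrthogonalEqBot]
  exact hecoe n
end

section
/- For every n ∈ ℕ, m ∈ ℤ, and every x ∈ ℂ \ {0}, the Rodrigues-type formula L_{n,m}(x) = (e^x / (x^m · n!)) · (d^n/dx^n)(e^{−x} x^{n+m}) holds. -/
/-- Generalized binomial coefficient `C(a, k)` for integer `a`, as a complex number. -/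
noncomputable def zchoose (a : ℤ) (k : ℕ) : ℂ :=
  (∏ j ∈ Finset.range k, ((a : ℂ) - (j : ℂ))) / (Nat.factorial k : ℂ)

/-- The generalized Laguerre polynomial `L_{n,m}(x) = ∑_{k=0}^n C(n+m, n-k) (-x)^k / k!`,
as an entire function of `x ∈ ℂ`. -/
noncomputable def lagLC (n : ℕ) (m : ℤ) (x : ℂ) : ℂ :=
  ∑ k ∈ Finset.range (n + 1), zchoose ((n : ℤ) + m) (n - k) * (-x) ^ k / (Nat.factorial k : ℂ)

/-- The generalized Laguerre function `φ_{n,m}(x) = e^{-x} L_{n,m}(2x)`. -/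
noncomputable def lagPhiC (n : ℕ) (m : ℤ) (x : ℂ) : ℂ := Complex.exp (-x) * lagLC n m (2 * x)

noncomputable def rodP (e : ℤ) (k : ℕ) : ℂ := ∏ j ∈ Finset.range k, ((e : ℂ) - (j : ℂ))

noncomputable def rodC (e : ℤ) (j k : ℕ) : ℂ :=
  (j.choose k : ℂ) * (-1) ^ (j - k) * rodP e k

lemma rodC_rec (e : ℤ) (j k : ℕ) (hk : k ≤ j) :
    rodC e (j+1) (k+1) = -rodC e j (k+1) + rodC e j k * ((e : ℂ) - k) := by
  unfold rodC rodP
  rw [Finset.prod_range_succ]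
  rcases eq_or_lt_of_le hk with rfl | h
  · simp [Nat.choose_succ_self]
  · have h1 : j - k = (j - (k+1)) + 1 := by omega
    have h2 : j + 1 - (k+1) = (j - (k+1)) + 1 := by omega
    rw [h1, h2, Nat.choose_succ_succ]
    push_cast
    ring

lemma rod_deriv (e : ℤ) (j : ℕ) :
    ∀ x : ℂ, x ≠ 0 → iteratedDeriv j (fun y : ℂ => Complex.exp (-y) * y ^ e) x
      = Complex.exp (-x) * ∑ k ∈ Finset.range (j+1), rodC e j k * x ^ (e - (k : ℤ)) := by
  induction j with
  | zero =>
    intro x hx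
    simp [rodC, rodP]
  | succ j ih =>
    intro x hx
    rw [iteratedDeriv_succ]
    have hEq : iteratedDeriv j (fun y : ℂ => Complex.exp (-y) * y ^ e)
        =ᶠ[nhds x] fun y => Complex.exp (-y) * ∑ k ∈ Finset.range (j+1), rodC e j k * y ^ (e - (k : ℤ)) := by
      filter_upwards [IsOpen.mem_nhds isOpen_ne hx] with y hy using ih y hy
    rw [hEq.deriv_eq]
    have hexp : HasDerivAt (fun y : ℂ => Complex.exp (-y)) (-Complex.exp (-x)) x := by
      have := (Complex.hasDerivAt_exp (-x)).comp x (hasDerivAt_neg x)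
      simpa [Function.comp_def] using this
    have hsum : HasDerivAt (fun y : ℂ => ∑ k ∈ Finset.range (j+1), rodC e j k * y ^ (e - (k : ℤ)))
        (∑ k ∈ Finset.range (j+1), rodC e j k * (((e : ℂ) - (k : ℂ)) * x ^ (e - (k : ℤ) - 1))) x := by
      apply HasDerivAt.fun_sum
      intro k hk
      have := (hasDerivAt_zpow (e - (k : ℤ)) x (Or.inl hx)).const_mul (rodC e j k)
      convert this using 2
      · rfl
      push_cast
      ring
    have hmul := hexp.fun_mul hsum
    rw [hmul.deriv]
    have hchoose : rodC e j (j+1) = 0 := by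
      simp [rodC, Nat.choose_succ_self]
    have h0 : rodC e (j+1) 0 = -rodC e j 0 := by
      simp [rodC, rodP, pow_succ]
    have hrhs : ∀ i ∈ Finset.range (j+1),
        rodC e (j+1) (i+1) * x ^ (e - ((i+1 : ℕ) : ℤ)) =
          -(rodC e j (i+1) * x ^ (e - ((i+1 : ℕ) : ℤ)))
            + rodC e j i * (((e:ℂ) - (i:ℂ)) * x ^ (e - (i:ℤ) - 1)) := by
      intro i hi
      rw [rodC_rec e j i (Nat.lt_succ_iff.mp (Finset.mem_range.mp hi))]
      have h2 : (e - ((i+1 : ℕ) : ℤ)) = e - (i:ℤ) - 1 := by push_cast; ring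
      rw [h2]
      ring
    have hA : ∑ k ∈ Finset.range (j+1+1), rodC e (j+1) k * x ^ (e - (k : ℤ))
        = -(∑ k ∈ Finset.range (j+1), rodC e j k * x ^ (e - (k:ℤ)))
          + ∑ k ∈ Finset.range (j+1), rodC e j k * (((e:ℂ) - (k:ℂ)) * x ^ (e - (k:ℤ) - 1)) := by
      rw [Finset.sum_range_succ' _ (j+1), Finset.sum_congr rfl hrhs, Finset.sum_add_distrib]
      rw [add_right_comm]
      congr 1
      rw [Finset.sum_range_succ, hchoose, zero_mul, neg_zero, add_zero,
        Finset.sum_range_succ' (fun k => rodC e j k * x ^ (e - (k:ℤ))) j, neg_add,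
        ← Finset.sum_neg_distrib, h0]
      push_cast
      ring_nf
    rw [hA]
    ring

theorem genLaguerre_rodrigues (n : ℕ) (m : ℤ) (x : ℂ) (hx : x ≠ 0) :
    lagLC n m x = Complex.exp x / (x ^ m * (Nat.factorial n : ℂ)) *
      iteratedDeriv n (fun y : ℂ => Complex.exp (-y) * y ^ ((n : ℤ) + m)) x := by
  rw [rod_deriv ((n:ℤ)+m) n x hx]
  have hxm : x ^ m ≠ 0 := zpow_ne_zero m hx
  have hfac : ((n.factorial : ℂ)) ≠ 0 := Nat.cast_ne_zero.mpr n.factorial_ne_zero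
  have hexp : Complex.exp x * Complex.exp (-x) = 1 := by
    rw [← Complex.exp_add]; simp
  set S := ∑ k ∈ Finset.range (n+1), rodC ((n:ℤ)+m) n k * x ^ (((n:ℤ)+m) - (k:ℤ)) with hS
  have hstep : Complex.exp x / (x ^ m * (n.factorial : ℂ)) * (Complex.exp (-x) * S)
      = S / (x ^ m * (n.factorial : ℂ)) := by
    rw [div_mul_eq_mul_div, div_eq_div_iff (mul_ne_zero hxm hfac) (mul_ne_zero hxm hfac)]
    calc Complex.exp x * (Complex.exp (-x) * S) * (x ^ m * ↑n.factorial)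
        = (Complex.exp x * Complex.exp (-x)) * (S * (x ^ m * ↑n.factorial)) := by ring
      _ = S * (x ^ m * ↑n.factorial) := by rw [hexp, one_mul]
  rw [hstep, eq_div_iff (mul_ne_zero hxm hfac), hS,
    ← Finset.sum_range_reflect (fun k => rodC ((n:ℤ)+m) n k * x ^ (((n:ℤ)+m) - (k:ℤ))) (n+1)]
  unfold lagLC
  rw [Finset.sum_mul]
  apply Finset.sum_congr rfl
  intro k hk
  have hkn : k ≤ n := Nat.lt_succ_iff.mp (Finset.mem_range.mp hk)
  have h1 : n + 1 - 1 - k = n - k := by omega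
  rw [h1]
  unfold zchoose rodC rodP
  have h2 : n - (n - k) = k := by omega
  rw [h2]
  have h3 : ((n:ℤ)+m) - (((n-k : ℕ)) : ℤ) = m + (k:ℤ) := by
    have : ((n - k : ℕ) : ℤ) = (n : ℤ) - k := by omega
    rw [this]; ring
  rw [h3, zpow_add₀ hx, zpow_natCast]
  rw [Nat.choose_symm hkn]
  have hck : (n.choose k : ℂ) * ((n-k).factorial : ℂ) * (k.factorial : ℂ) = (n.factorial : ℂ) := by
    have := Nat.choose_mul_factorial_mul_factorial hkn
    push_cast [← this]
    ring
  have hfk : ((k.factorial : ℂ)) ≠ 0 := Nat.cast_ne_zero.mpr k.factorial_ne_zero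
  have hfnk : (((n-k).factorial : ℂ)) ≠ 0 := Nat.cast_ne_zero.mpr (n-k).factorial_ne_zero
  rw [neg_pow]
  set P : ℂ := ∏ j ∈ Finset.range (n-k), ((((n:ℤ)+m : ℤ) : ℂ) - (j:ℂ)) with hP
  field_simp
  linear_combination (-P) * hck
end

section
/- Let n, k, l ∈ ℕ and let p be a polynomial of degree at most n. If |l − k| > n, then ∫₀^∞ p(x) φ_l(x) φ_k(x) dx = 0. -/
open MeasureTheory Set
open scoped ENNReal

/-! ### Auxiliary lemmas -/

/-- Alternating sum of binomial coefficients over ℝ. -/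
lemma alt_sum_choose_real {N : ℕ} (hN : N ≠ 0) :
    ∑ i ∈ Finset.range (N + 1), (-1 : ℝ) ^ i * (N.choose i : ℝ) = 0 := by
  have h := Int.alternating_sum_range_choose_of_ne hN
  have : ((∑ i ∈ Finset.range (N + 1), (-1 : ℤ) ^ i * (N.choose i : ℤ) : ℤ) : ℝ) = 0 := by
    rw [h]; norm_num
  rw [← this]
  push_cast
  ring

lemma inner_alt (l m : ℕ) (hm : m < l) :
    ∑ k ∈ Finset.range (l + 1), (-1 : ℝ) ^ k * (l.choose k : ℝ) * (k.choose m : ℝ) = 0 := by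
  have hsub : ∑ k ∈ Finset.range (l + 1), (-1 : ℝ) ^ k * (l.choose k : ℝ) * (k.choose m : ℝ)
      = ∑ k ∈ Finset.Ico m (l + 1), (-1 : ℝ) ^ k * (l.choose k : ℝ) * (k.choose m : ℝ) := by
    rw [Finset.range_eq_Ico]
    refine (Finset.sum_subset (Finset.Ico_subset_Ico (Nat.zero_le m) le_rfl) ?_).symm
    intro x hx hx'
    simp only [Finset.mem_Ico] at hx hx'
    have : x < m := by omega
    rw [Nat.choose_eq_zero_of_lt this]
    simp
  rw [hsub, Finset.sum_Ico_eq_sum_range]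
  have hrw : ∀ i ∈ Finset.range (l + 1 - m),
      (-1 : ℝ) ^ (m + i) * (l.choose (m + i) : ℝ) * ((m + i).choose m : ℝ)
      = ((-1 : ℝ) ^ m * (l.choose m : ℝ)) * ((-1 : ℝ) ^ i * ((l - m).choose i : ℝ)) := by
    intro i hi
    simp only [Finset.mem_range] at hi
    have h1 : m + i ≤ l := by omega
    have h2 : m ≤ m + i := Nat.le_add_right m i
    have hc := Nat.choose_mul (n := l) h2
    have hmi : m + i - m = i := by omega
    rw [hmi] at hc
    have hc' : (l.choose (m + i) : ℝ) * ((m + i).choose m : ℝ)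
        = (l.choose m : ℝ) * ((l - m).choose i : ℝ) := by exact_mod_cast hc
    rw [pow_add, mul_assoc, mul_assoc, hc']
    ring
  rw [Finset.sum_congr rfl hrw, ← Finset.mul_sum]
  have : l + 1 - m = (l - m) + 1 := by omega
  rw [this, alt_sum_choose_real (by omega : l - m ≠ 0), mul_zero]

lemma key_alt_sum (l j : ℕ) (hj : j < l) :
    ∑ k ∈ Finset.range (l + 1),
      (-1 : ℝ) ^ k * (l.choose k : ℝ) * (((j + k).choose j : ℕ) : ℝ) = 0 := by
  have hvand : ∀ k : ℕ, (((j + k).choose j : ℕ) : ℝ)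
      = ∑ m ∈ Finset.range (j + 1), (j.choose m : ℝ) * (k.choose (j - m) : ℝ) := by
    intro k
    have h := Nat.add_choose_eq j k j
    rw [Finset.Nat.sum_antidiagonal_eq_sum_range_succ_mk] at h
    rw [h]
    push_cast
    rfl
  calc ∑ k ∈ Finset.range (l + 1),
        (-1 : ℝ) ^ k * (l.choose k : ℝ) * (((j + k).choose j : ℕ) : ℝ)
      = ∑ k ∈ Finset.range (l + 1), ∑ m ∈ Finset.range (j + 1),
          (j.choose m : ℝ) * ((-1 : ℝ) ^ k * (l.choose k : ℝ) * (k.choose (j - m) : ℝ)) := by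
        refine Finset.sum_congr rfl fun k _ => ?_
        rw [hvand k, Finset.mul_sum]
        refine Finset.sum_congr rfl fun m _ => ?_
        ring
    _ = ∑ m ∈ Finset.range (j + 1), (j.choose m : ℝ) *
          ∑ k ∈ Finset.range (l + 1),
            (-1 : ℝ) ^ k * (l.choose k : ℝ) * (k.choose (j - m) : ℝ) := by
        rw [Finset.sum_comm]
        exact Finset.sum_congr rfl fun m _ => (Finset.mul_sum _ _ _).symm
    _ = 0 := by
        refine Finset.sum_eq_zero fun m hm => ?_
        rw [inner_alt l (j - m) (by omega), mul_zero]

/-- Integrability of `x^m * exp(-2x)` on `Ioi 0`. -/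
lemma integrableOn_pow_mul_exp (m : ℕ) :
    IntegrableOn (fun x : ℝ => x ^ m * Real.exp (-2 * x)) (Ioi 0) := by
  have h := integrableOn_rpow_mul_exp_neg_mul_rpow
    (s := (m : ℝ)) (p := 1) (b := 2)
    (by linarith [Nat.cast_nonneg (α := ℝ) m]) (by norm_num) (by norm_num)
  refine h.congr_fun ?_ measurableSet_Ioi
  intro x hx
  simp only [Real.rpow_one, Real.rpow_natCast]

/-- The moment integral. -/
lemma integral_pow_mul_exp (m : ℕ) :
    ∫ x in Ioi (0:ℝ), x ^ m * Real.exp (-2 * x) = (Nat.factorial m : ℝ) / 2 ^ (m + 1) := by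
  have h := Real.integral_rpow_mul_exp_neg_mul_Ioi (a := (m : ℝ) + 1) (r := 2)
    (by positivity) (by norm_num)
  have heq : ∫ t in Ioi (0:ℝ), t ^ ((m : ℝ) + 1 - 1) * Real.exp (-(2 * t))
      = ∫ x in Ioi (0:ℝ), x ^ m * Real.exp (-2 * x) := by
    refine setIntegral_congr_fun measurableSet_Ioi fun x hx => ?_
    simp only [mem_Ioi] at hx
    rw [add_sub_cancel_right, Real.rpow_natCast, neg_mul]
  rw [heq] at h
  rw [h]
  have hcast : (m : ℝ) + 1 = ((m + 1 : ℕ) : ℝ) := by push_cast; ring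
  rw [hcast, Real.rpow_natCast]
  push_cast
  rw [Real.Gamma_nat_eq_factorial]
  rw [div_pow, one_pow]
  ring

/-- The polynomial whose evaluation at `x` is `lagL l (2*x)`. -/
noncomputable def lagPoly (l : ℕ) : Polynomial ℝ :=
  ∑ k ∈ Finset.range (l + 1),
    Polynomial.C ((l.choose (l - k) : ℝ) * (-2) ^ k / (Nat.factorial k : ℝ)) * Polynomial.X ^ k

lemma lagPoly_eval (l : ℕ) (x : ℝ) : (lagPoly l).eval x = lagL l (2 * x) := by
  simp only [lagPoly, lagL, Polynomial.eval_finset_sum, Polynomial.eval_mul,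
    Polynomial.eval_pow, Polynomial.eval_C, Polynomial.eval_X]
  refine Finset.sum_congr rfl fun k _ => ?_
  rw [show -(2 * x) = (-2) * x by ring, mul_pow]
  ring

lemma natDegree_lagPoly (l : ℕ) : (lagPoly l).natDegree ≤ l := by
  refine Polynomial.natDegree_sum_le_of_forall_le _ _ fun i hi => ?_
  simp only [Finset.mem_range] at hi
  exact (Polynomial.natDegree_C_mul_X_pow_le _ _).trans (by omega)

/-- Integrability of polynomials against `exp(-2x)`. -/
lemma integrableOn_poly_mul_exp (q : Polynomial ℝ) :
    IntegrableOn (fun x : ℝ => q.eval x * Real.exp (-2 * x)) (Ioi 0) := by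
  induction q using Polynomial.induction_on' with
  | add r s hr hs =>
    simpa only [Polynomial.eval_add, add_mul, Pi.add_def] using hr.add hs
  | monomial m a =>
    have := (integrableOn_pow_mul_exp m).const_mul a
    simpa only [Polynomial.eval_monomial, mul_assoc, IntegrableOn] using this

/-- Moment orthogonality: `∫ x^j L_l(2x) e^{-2x} = 0` for `j < l`. -/
lemma moment_zero (l j : ℕ) (hj : j < l) :
    ∫ x in Ioi (0:ℝ), x ^ j * lagL l (2 * x) * Real.exp (-2 * x) = 0 := by
  have hfun : ∀ x : ℝ, x ^ j * lagL l (2 * x) * Real.exp (-2 * x)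
      = ∑ k ∈ Finset.range (l + 1),
          ((l.choose (l - k) : ℝ) * (-2) ^ k / (Nat.factorial k : ℝ))
            * (x ^ (j + k) * Real.exp (-2 * x)) := by
    intro x
    rw [lagL, Finset.mul_sum, Finset.sum_mul]
    refine Finset.sum_congr rfl fun k _ => ?_
    rw [show -(2 * x) = (-2) * x by ring, mul_pow, pow_add]
    ring
  simp_rw [hfun]
  rw [MeasureTheory.integral_finset_sum _ (fun k _ =>
    ((integrableOn_pow_mul_exp (j + k)).const_mul _))]
  simp_rw [MeasureTheory.integral_const_mul, integral_pow_mul_exp]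
  have hterm : ∀ kk ∈ Finset.range (l + 1),
      ((l.choose (l - kk) : ℝ) * (-2) ^ kk / (Nat.factorial kk : ℝ))
        * ((Nat.factorial (j + kk) : ℝ) / 2 ^ (j + kk + 1))
      = ((-1 : ℝ) ^ kk * (l.choose kk : ℝ) * (((j + kk).choose j : ℕ) : ℝ))
          * ((Nat.factorial j : ℝ) / 2 ^ (j + 1)) := by
    intro kk hkk
    simp only [Finset.mem_range] at hkk
    have hsymm : l.choose (l - kk) = l.choose kk := Nat.choose_symm (by omega)
    have hfact : (Nat.factorial (j + kk) : ℝ)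
        = (((j + kk).choose j : ℕ) : ℝ) * (Nat.factorial j : ℝ) * (Nat.factorial kk : ℝ) := by
      have h2 := Nat.add_choose_mul_factorial_mul_factorial kk j
      have h3 : Nat.factorial (j + kk)
          = (j + kk).choose j * Nat.factorial j * Nat.factorial kk := by
        rw [Nat.add_comm j kk, ← h2]; ring
      exact_mod_cast h3
    rw [hsymm, hfact, neg_pow, pow_add, pow_add]
    have hk0 : (Nat.factorial kk : ℝ) ≠ 0 := Nat.cast_ne_zero.mpr (Nat.factorial_ne_zero kk)
    field_simp
    ring
  rw [Finset.sum_congr rfl hterm, ← Finset.sum_mul, key_alt_sum l j hj, zero_mul]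

/-- Orthogonality against low-degree polynomials. -/
lemma poly_orth (l : ℕ) (q : Polynomial ℝ) (hq : q.natDegree < l) :
    ∫ x in Ioi (0:ℝ), q.eval x * lagL l (2 * x) * Real.exp (-2 * x) = 0 := by
  have hfun : ∀ x : ℝ, q.eval x * lagL l (2 * x) * Real.exp (-2 * x)
      = ∑ m ∈ Finset.range l,
          q.coeff m * (x ^ m * lagL l (2 * x) * Real.exp (-2 * x)) := by
    intro x
    rw [Polynomial.eval_eq_sum_range' hq, Finset.sum_mul, Finset.sum_mul]
    refine Finset.sum_congr rfl fun m _ => ?_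
    ring
  simp_rw [hfun]
  rw [MeasureTheory.integral_finset_sum]
  · refine Finset.sum_eq_zero fun m hm => ?_
    simp only [Finset.mem_range] at hm
    rw [MeasureTheory.integral_const_mul, moment_zero l m hm, mul_zero]
  · intro m hm
    have hint := (integrableOn_poly_mul_exp (Polynomial.X ^ m * lagPoly l)).const_mul
      (q.coeff m)
    refine MeasureTheory.IntegrableOn.congr_fun hint ?_ measurableSet_Ioi
    intro x _
    simp only [Polynomial.eval_mul, Polynomial.eval_pow, Polynomial.eval_X, lagPoly_eval]

theorem laguerre_weighted_orthogonality (n l k : ℕ) (p : Polynomial ℝ)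
    (hp : p.natDegree ≤ n) (hlk : (n : ℤ) < |(l : ℤ) - (k : ℤ)|) :
    ∫ x in Ioi (0:ℝ), p.eval x * lagPhi l x * lagPhi k x = 0 := by
  have hcase : n + k < l ∨ n + l < k := by
    rcases abs_cases ((l : ℤ) - (k : ℤ)) with ⟨h1, _⟩ | ⟨h1, _⟩ <;> [left; right] <;> omega
  rcases hcase with hc | hc
  · have hfun : ∀ x : ℝ, p.eval x * lagPhi l x * lagPhi k x
        = (p * lagPoly k).eval x * lagL l (2 * x) * Real.exp (-2 * x) := by
      intro x
      rw [lagPhi, lagPhi, Polynomial.eval_mul, lagPoly_eval,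
        show (-2 : ℝ) * x = -x + -x by ring, Real.exp_add]
      ring
    simp_rw [hfun]
    refine poly_orth l _ (lt_of_le_of_lt ?_ hc)
    exact Polynomial.natDegree_mul_le.trans (add_le_add hp (natDegree_lagPoly k))
  · have hfun : ∀ x : ℝ, p.eval x * lagPhi l x * lagPhi k x
        = (p * lagPoly l).eval x * lagL k (2 * x) * Real.exp (-2 * x) := by
      intro x
      rw [lagPhi, lagPhi, Polynomial.eval_mul, lagPoly_eval,
        show (-2 : ℝ) * x = -x + -x by ring, Real.exp_add]
      ring
    simp_rw [hfun]
    refine poly_orth k _ (lt_of_le_of_lt ?_ hc)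
    exact Polynomial.natDegree_mul_le.trans (add_le_add hp (natDegree_lagPoly l))
end

section
/- For every t ∈ ℂ with |t| < 1 and every x ∈ ℂ, the series Σ_{k=0}^∞ L_k(x) t^k converges and equals e^{−tx/(1−t)} / (1 − t). -/
/-- The Laguerre polynomial `L_n(x) = ∑_{k=0}^n C(n, n-k) (-x)^k / k!` over `ℂ`. -/
noncomputable def lagLc (n : ℕ) (x : ℂ) : ℂ :=
  ∑ k ∈ Finset.range (n + 1), (n.choose (n - k) : ℂ) * (-x) ^ k / (Nat.factorial k : ℂ)

set_option maxHeartbeats 800000 in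
theorem laguerre_generating_function (t x : ℂ) (ht : ‖t‖ < 1) :
    HasSum (fun k : ℕ => lagLc k x * t ^ k)
      (Complex.exp (-(t * x) / (1 - t)) / (1 - t)) := by
  have ht' : ‖t‖ < 1 := ht
  have h1t : (1 : ℂ) - t ≠ 0 := by
    intro h
    have : t = 1 := by linear_combination -h
    simp [this] at ht'
  set f : ℕ × ℕ → ℂ := fun p =>
    ((p.1 + p.2).choose p.1 : ℂ) * (-x) ^ p.1 / (p.1.factorial : ℂ) * t ^ (p.1 + p.2) with hf
  -- fiberwise sums
  have fiber : ∀ k : ℕ, HasSum (fun m => f (k, m))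
      (((-x) ^ k / (k.factorial : ℂ) * t ^ k) * (1 / (1 - t) ^ (k + 1))) := by
    intro k
    have h := (hasSum_choose_mul_geometric_of_norm_lt_one k ht').mul_left
      ((-x) ^ k / (k.factorial : ℂ) * t ^ k)
    refine h.congr_fun fun m => ?_
    simp only [hf]
    rw [Nat.add_comm k m, pow_add]
    ring
  -- summability of the double family
  have hsumm : Summable f := by
    apply Summable.of_norm
    have hnorm : ∀ p : ℕ × ℕ, ‖f p‖ =
        ((p.1 + p.2).choose p.1 : ℝ) * ‖x‖ ^ p.1 / (p.1.factorial : ℝ) * ‖t‖ ^ (p.1 + p.2) := by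
      intro p
      simp [hf, norm_div, norm_mul, norm_pow, abs_of_nonneg]
    rw [show (fun p => ‖f p‖) = fun p : ℕ × ℕ =>
        ((p.1 + p.2).choose p.1 : ℝ) * ‖x‖ ^ p.1 / (p.1.factorial : ℝ) * ‖t‖ ^ (p.1 + p.2)
      from funext hnorm]
    have fiberR : ∀ k : ℕ, HasSum
        (fun m => ((k + m).choose k : ℝ) * ‖x‖ ^ k / (k.factorial : ℝ) * ‖t‖ ^ (k + m))
        ((‖x‖ ^ k / (k.factorial : ℝ) * ‖t‖ ^ k) * (1 / (1 - ‖t‖) ^ (k + 1))) := by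
      intro k
      have h := (hasSum_choose_mul_geometric_of_norm_lt_one k (by rw [Real.norm_eq_abs, abs_of_nonneg (norm_nonneg t)]; exact ht')).mul_left
        (‖x‖ ^ k / (k.factorial : ℝ) * ‖t‖ ^ k)
      refine h.congr_fun fun m => ?_
      rw [Nat.add_comm k m, pow_add]
      ring
    have h1t' : (0 : ℝ) < 1 - ‖t‖ := by linarith
    apply (summable_prod_of_nonneg ?_).2 ⟨fun k => (fiberR k).summable, ?_⟩
    · intro p
      positivity
    · refine Summable.congr ?_ (fun k => ((fiberR k).tsum_eq).symm)
      have : Summable (fun k : ℕ => (‖x‖ * ‖t‖ / (1 - ‖t‖)) ^ k / (k.factorial : ℝ)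
          * (1 / (1 - ‖t‖))) :=
        (Real.summable_pow_div_factorial _).mul_right _
      refine this.congr fun k => ?_
      rw [div_pow, mul_pow, pow_succ]
      field_simp
  -- the sum over k of the fiber sums is the target
  have hexp : HasSum (fun k : ℕ => (-(t * x) / (1 - t)) ^ k / (k.factorial : ℂ))
      (Complex.exp (-(t * x) / (1 - t))) := by
    rw [Complex.exp_eq_exp_ℂ]
    exact NormedSpace.expSeries_div_hasSum_exp _
  have hg : HasSum (fun k : ℕ => ((-x) ^ k / (k.factorial : ℂ) * t ^ k) * (1 / (1 - t) ^ (k + 1)))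
      (Complex.exp (-(t * x) / (1 - t)) / (1 - t)) := by
    have h := hexp.div_const (1 - t)
    refine h.congr_fun fun k => ?_
    rw [div_pow, pow_succ]
    have hk : ((k.factorial : ℂ)) ≠ 0 := Nat.cast_ne_zero.2 k.factorial_ne_zero
    field_simp
    ring
  have hfS : HasSum f (Complex.exp (-(t * x) / (1 - t)) / (1 - t)) := by
    have h1 := hsumm.hasSum.prod_fiberwise fiber
    rw [hg.unique h1]
    exact hsumm.hasSum
  -- regroup along antidiagonals
  have hsigma : HasSum (fun σ : Σ n : ℕ, Finset.HasAntidiagonal.antidiagonal n => f σ.2)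
      (Complex.exp (-(t * x) / (1 - t)) / (1 - t)) :=
    Finset.HasAntidiagonal.sigmaAntidiagonalEquivProd.hasSum_iff.2 hfS
  have hfin : ∀ n : ℕ, HasSum (fun p : Finset.HasAntidiagonal.antidiagonal n => f p)
      (∑ p ∈ Finset.HasAntidiagonal.antidiagonal n, f p) := fun n => Finset.hasSum _ _
  have hmain := hsigma.sigma hfin
  refine hmain.congr_fun fun n => ?_
  rw [Finset.Nat.sum_antidiagonal_eq_sum_range_succ_mk, lagLc, Finset.sum_mul]
  refine Finset.sum_congr rfl fun k hk => ?_
  have hkn : k ≤ n := Nat.lt_succ_iff.1 (Finset.mem_range.1 hk)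
  simp only [hf]
  rw [Nat.add_sub_cancel' hkn, Nat.choose_symm hkn]
end

section
/- For every b ∈ ℂ with Re(b) > −1 and every n ∈ ℕ, ∫₀^∞ e^{−bξ} φ_n(ξ) dξ = (b−1)^n / (b+1)^{n+1}. -/
open MeasureTheory Set
open scoped ENNReal

open Filter Asymptotics

lemma real_pow_exp_integrable {a : ℝ} (ha : 0 < a) (k : ℕ) :
    IntegrableOn (fun ξ : ℝ => ξ ^ k * Real.exp (-a * ξ)) (Ioi 0) := by
  apply integrable_of_isBigO_exp_neg (half_pos ha)
  · exact ((continuous_pow k).mul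
      (Real.continuous_exp.comp (continuous_const.mul continuous_id))).continuousOn
  · rw [isBigO_iff]
    refine ⟨1, ?_⟩
    have h : Tendsto (fun x : ℝ => x ^ (k : ℝ) * Real.exp (-(a/2) * x)) atTop (nhds 0) :=
      tendsto_rpow_mul_exp_neg_mul_atTop_nhds_zero _ _ (half_pos ha)
    have h2 : ∀ᶠ x : ℝ in atTop, |x ^ (k : ℝ) * Real.exp (-(a/2) * x)| ≤ 1 := by
      have := h.eventually (eventually_le_nhds (show (0:ℝ) < 1 by norm_num))
      filter_upwards [this, eventually_ge_atTop (0:ℝ)] with x hx hx0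
      rw [abs_of_nonneg (by positivity)]; exact hx
    filter_upwards [h2, eventually_ge_atTop (0:ℝ)] with x hx hx0
    have hxp : x ^ k * Real.exp (-a * x) = (x ^ (k:ℝ) * Real.exp (-(a/2) * x)) *
        Real.exp (-(a/2) * x) := by
      rw [Real.rpow_natCast, mul_assoc, ← Real.exp_add]
      ring_nf
    rw [Real.norm_eq_abs, Real.norm_eq_abs, hxp, abs_mul]
    exact mul_le_mul_of_nonneg_right hx (abs_nonneg _)

lemma cpow_exp_integrable {c : ℂ} (hc : 0 < c.re) (k : ℕ) :
    IntegrableOn (fun ξ : ℝ => (ξ : ℂ) ^ k * Complex.exp (-c * ξ)) (Ioi 0) := by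
  refine Integrable.mono' (real_pow_exp_integrable hc k) ?_ ?_
  · exact (Continuous.aestronglyMeasurable (by continuity)).restrict
  · refine (ae_restrict_iff' measurableSet_Ioi).2 (Filter.Eventually.of_forall fun x hx => ?_)
    simp only [norm_mul, norm_pow, Complex.norm_exp]
    simp only [Complex.norm_real, Real.norm_eq_abs, abs_of_nonneg (le_of_lt (mem_Ioi.mp hx)),
      Complex.mul_re, Complex.neg_re, Complex.ofReal_re, Complex.neg_im, Complex.ofReal_im,
      mul_zero, sub_zero]
    exact le_rfl

lemma key_integral {c : ℂ} (hc : 0 < c.re) (k : ℕ) :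
    ∫ ξ in Ioi (0:ℝ), (ξ : ℂ) ^ k * Complex.exp (-c * ξ)
      = (Nat.factorial k : ℂ) / c ^ (k + 1) := by
  have hc0 : c ≠ 0 := fun h => by simp [h] at hc
  have htend : ∀ m : ℕ, Tendsto (fun ξ : ℝ => (ξ:ℂ) ^ m * Complex.exp (-c * ξ)) atTop (nhds 0) := by
    intro m
    rw [tendsto_zero_iff_norm_tendsto_zero]
    have : (fun ξ : ℝ => ‖(ξ:ℂ) ^ m * Complex.exp (-c * ξ)‖) =ᶠ[atTop]
        fun ξ : ℝ => ξ ^ (m:ℝ) * Real.exp (-c.re * ξ) := by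
      filter_upwards [eventually_ge_atTop (0:ℝ)] with x hx0
      simp only [norm_mul, norm_pow, Complex.norm_exp]
      simp [Complex.mul_re, abs_of_nonneg hx0, Real.rpow_natCast]
    rw [tendsto_congr' this]
    exact tendsto_rpow_mul_exp_neg_mul_atTop_nhds_zero _ _ hc
  induction k with
  | zero =>
    have hF : ∀ x ∈ Ici (0:ℝ), HasDerivAt (fun ξ : ℝ => -Complex.exp (-c * ξ) / c)
        (Complex.exp (-c * x)) x := by
      intro x _
      have h1 : HasDerivAt (fun ξ : ℝ => Complex.exp (-c * ξ)) (-c * Complex.exp (-c * x)) x := by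
        have := ((Complex.hasDerivAt_exp (-c * x)).comp x
          (((Complex.ofRealCLM.hasDerivAt (x := x))).const_mul (-c)))
        simpa [mul_comm, Function.comp_def] using this
      have := (h1.neg).div_const c
      refine this.congr_deriv ?_
      rw [div_eq_iff hc0]; ring
    have hlim : Tendsto (fun ξ : ℝ => -Complex.exp (-c * ξ) / c) atTop (nhds 0) := by
      have := ((htend 0).neg).div_const c
      simpa using this
    have := integral_Ioi_of_hasDerivAt_of_tendsto' hF
      ((cpow_exp_integrable hc 0).congr_fun (by intro x _; simp) measurableSet_Ioi) hlim
    rw [show (fun ξ : ℝ => (ξ:ℂ)^0 * Complex.exp (-c * ξ)) = fun ξ : ℝ => Complex.exp (-c * ξ)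
      by funext; simp] at *
    rw [this]
    simp only [Complex.ofReal_zero, mul_zero, Complex.exp_zero, Nat.factorial_zero,
      Nat.cast_one, pow_one, zero_sub, neg_div, neg_neg, one_div, zero_add]
  | succ k ih =>
    -- F ξ = -ξ^(k+1) exp(-cξ)/c ; F' ξ = ξ^(k+1) exp(-cξ) - ((k+1)/c) ξ^k exp(-cξ)
    set F : ℝ → ℂ := fun ξ => -(ξ:ℂ) ^ (k+1) * Complex.exp (-c * ξ) / c with hFdef
    have hF : ∀ x ∈ Ici (0:ℝ), HasDerivAt F
        ((x:ℂ)^(k+1) * Complex.exp (-c * x) - ((k+1:ℕ):ℂ)/c * ((x:ℂ)^k * Complex.exp (-c * x))) x := by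
      intro x _
      have hp : HasDerivAt (fun ξ : ℝ => (ξ:ℂ) ^ (k+1)) (((k+1:ℕ):ℂ) * (x:ℂ)^k) x := by
        have := (hasDerivAt_pow (k+1) (x:ℂ)).comp x (Complex.ofRealCLM.hasDerivAt (x := x))
        simpa [mul_comm, Function.comp_def] using this
      have he : HasDerivAt (fun ξ : ℝ => Complex.exp (-c * ξ)) (-c * Complex.exp (-c * x)) x := by
        have := ((Complex.hasDerivAt_exp (-c * x)).comp x
          (((Complex.ofRealCLM.hasDerivAt (x := x))).const_mul (-c)))
        simpa [mul_comm, Function.comp_def] using this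
      have h3 := ((hp.mul he).neg).div_const c
      have h4 : F = fun ξ : ℝ => -((ξ:ℂ)^(k+1) * Complex.exp (-c * ξ)) / c := by
        funext ξ; rw [hFdef]; ring
      rw [h4]
      refine h3.congr_deriv ?_
      field_simp
      ring
    have hlim : Tendsto F atTop (nhds 0) := by
      have := ((htend (k+1)).neg).div_const c
      simpa [hFdef, neg_mul] using this
    have hint : IntegrableOn (fun x : ℝ =>
        (x:ℂ)^(k+1) * Complex.exp (-c * x) - ((k+1:ℕ):ℂ)/c * ((x:ℂ)^k * Complex.exp (-c * x)))
        (Ioi 0) :=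
      (cpow_exp_integrable hc (k+1)).sub ((cpow_exp_integrable hc k).const_mul _)
    have hFTC := integral_Ioi_of_hasDerivAt_of_tendsto' hF hint hlim
    have hF0 : F 0 = 0 := by simp [hFdef]
    rw [hF0, sub_zero] at hFTC
    rw [MeasureTheory.integral_sub (cpow_exp_integrable hc (k+1))
        ((cpow_exp_integrable hc k).const_mul _),
      MeasureTheory.integral_const_mul, ih] at hFTC
    have : ∫ x in Ioi (0:ℝ), (x:ℂ)^(k+1) * Complex.exp (-c * x)
        = ((k+1:ℕ):ℂ)/c * ((Nat.factorial k : ℂ) / c ^ (k+1)) := by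
      linear_combination hFTC
    rw [this, Nat.factorial_succ]
    push_cast
    rw [div_mul_div_comm, ← pow_succ']

theorem laguerre_exp_integral (b : ℂ) (hb : -1 < b.re) (n : ℕ) :
    ∫ ξ in Ioi (0:ℝ), Complex.exp (-b * ξ) * (lagPhi n ξ : ℂ)
      = (b - 1) ^ n / (b + 1) ^ (n + 1) := by
  have hc : 0 < (b + 1).re := by simpa [Complex.add_re] using by linarith
  have hc0 : b + 1 ≠ 0 := fun h => by simp [h] at hc
  have hrw : ∀ ξ ∈ Ioi (0:ℝ), Complex.exp (-b * ξ) * (lagPhi n ξ : ℂ)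
      = ∑ k ∈ Finset.range (n + 1),
        ((n.choose (n - k) : ℂ) * (-2) ^ k / (Nat.factorial k : ℂ)) *
          ((ξ:ℂ) ^ k * Complex.exp (-(b+1) * ξ)) := by
    intro ξ _
    rw [lagPhi, lagL]
    push_cast
    rw [Finset.mul_sum, Finset.mul_sum]
    refine Finset.sum_congr rfl fun k _ => ?_
    have he : Complex.exp (-(b+1) * ξ) = Complex.exp (-b * ξ) * Complex.exp (-(ξ:ℂ)) := by
      rw [← Complex.exp_add]; ring_nf
    have h2k : (-(2 * (ξ:ℂ))) ^ k = (-2) ^ k * (ξ:ℂ) ^ k := by rw [← neg_mul, mul_pow]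
    rw [he, h2k]
    ring
  rw [setIntegral_congr_fun measurableSet_Ioi hrw]
  rw [MeasureTheory.integral_finset_sum _ fun k _ =>
    ((cpow_exp_integrable hc k).const_mul _)]
  have hterm : ∀ k ∈ Finset.range (n + 1),
      (∫ ξ in Ioi (0:ℝ), ((n.choose (n - k) : ℂ) * (-2) ^ k / (Nat.factorial k : ℂ)) *
        ((ξ:ℂ) ^ k * Complex.exp (-(b+1) * ξ)))
      = (n.choose k : ℂ) * (-2) ^ k * (b+1) ^ (n - k) / (b + 1) ^ (n + 1) := by
    intro k hk
    rw [Finset.mem_range] at hk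
    have hkn : k ≤ n := Nat.lt_succ_iff.mp hk
    rw [MeasureTheory.integral_const_mul, key_integral hc k, Nat.choose_symm hkn]
    have hfac : (Nat.factorial k : ℂ) ≠ 0 := Nat.cast_ne_zero.2 (Nat.factorial_ne_zero k)
    have hpow : (b+1) ^ (n - k) * (b+1) ^ (k+1) = (b+1) ^ (n+1) := by
      rw [← pow_add]; congr 1; omega
    field_simp
    rw [← hpow]
    ring
  rw [Finset.sum_congr rfl hterm, ← Finset.sum_div]
  congr 1
  have := add_pow (-2 : ℂ) (b + 1) n
  have h2 : (-2 : ℂ) + (b + 1) = b - 1 := by ring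
  rw [h2] at this
  rw [this]
  refine Finset.sum_congr rfl fun k _ => ?_
  ring
end

section
/- For every b ∈ ℂ with Re(b) > 0 and every ξ ∈ ℝ with ξ ≥ 0, the series (2/(b+1)) Σ_{n=0}^∞ ((b−1)/(b+1))^n φ_n(ξ) converges to e^{−bξ}, and this expansion also converges to the function ξ ↦ e^{−bξ} in L²((0,∞)). -/
open MeasureTheory Set
open scoped ENNReal

set_option maxHeartbeats 1000000

lemma lag_sum_I2 (n p : ℕ) :
    ∑ j ∈ Finset.range (n+1), (-1:ℤ)^j * (n.choose j) * (j.choose p) =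
      if p = n then (-1:ℤ)^n else 0 := by
  by_cases hp : p ≤ n
  · have hsub : Finset.Ico p (n+1) ⊆ Finset.range (n+1) := by
      intro x hx; simp only [Finset.mem_Ico] at hx; simp only [Finset.mem_range]; omega
    have h0 : ∀ j ∈ Finset.range (n+1), j ∉ Finset.Ico p (n+1) →
        (-1:ℤ)^j * (n.choose j) * (j.choose p) = 0 := by
      intro j hj hj'
      simp only [Finset.mem_range] at hj
      simp only [Finset.mem_Ico] at hj'
      have : j < p := by omega
      simp [Nat.choose_eq_zero_of_lt this]
    rw [← Finset.sum_subset hsub h0, Finset.sum_Ico_eq_sum_range]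
    have hstep : ∀ i ∈ Finset.range (n + 1 - p),
        (-1:ℤ)^(p+i) * (n.choose (p+i)) * ((p+i).choose p)
          = ((-1:ℤ)^p * (n.choose p)) * ((-1:ℤ)^i * ((n-p).choose i)) := by
      intro i hi
      simp only [Finset.mem_range] at hi
      have hkn : p + i ≤ n := by omega
      have hsk : p ≤ p + i := Nat.le_add_right _ _
      have hm := Nat.choose_mul (n := n) hsk
      rw [Nat.add_sub_cancel_left] at hm
      have hm' : ((n.choose (p+i)) * ((p+i).choose p) : ℤ) = (n.choose p) * ((n-p).choose i) := by
        exact_mod_cast congrArg (Nat.cast : ℕ → ℤ) hm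
      rw [pow_add]
      linear_combination ((-1:ℤ)^p * (-1:ℤ)^i) * hm'
    rw [Finset.sum_congr rfl hstep, ← Finset.mul_sum]
    have hrange : n + 1 - p = (n - p) + 1 := by omega
    rw [hrange, Int.alternating_sum_range_choose]
    by_cases hpn : p = n
    · subst hpn; simp
    · have : ¬ (n - p = 0) := by omega
      simp [this, hpn]
  · have h0 : ∀ j ∈ Finset.range (n+1), (-1:ℤ)^j * (n.choose j) * (j.choose p) = 0 := by
      intro j hj
      simp only [Finset.mem_range] at hj
      have : j < p := by omega
      simp [Nat.choose_eq_zero_of_lt this]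
    rw [Finset.sum_congr rfl h0]
    have : ¬ (p = n) := by omega
    simp [this]

lemma lag_sum_I1 (n k : ℕ) :
    ∑ j ∈ Finset.range (n+1), (-1:ℤ)^j * (n.choose j) * ((j+k).choose j)
      = (-1:ℤ)^n * (k.choose n) := by
  have hV : ∀ j ∈ Finset.range (n+1),
      (j+k).choose j = ∑ a ∈ Finset.range (n+1), (k.choose a) * (j.choose a) := by
    intro j hj
    simp only [Finset.mem_range] at hj
    have h1 : (j+k).choose j = (k+j).choose j := by rw [Nat.add_comm]
    rw [h1, Nat.add_choose_eq]
    rw [Finset.Nat.sum_antidiagonal_eq_sum_range_succ (fun a b => k.choose a * j.choose b) j]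
    have h2 : ∀ a ∈ Finset.range (j+1), k.choose a * j.choose (j - a) = k.choose a * j.choose a := by
      intro a ha
      simp only [Finset.mem_range] at ha
      rw [Nat.choose_symm (by omega)]
    rw [Finset.sum_congr rfl h2]
    apply Finset.sum_subset (Finset.range_subset_range.mpr (by omega))
    intro a ha ha'
    simp only [Finset.mem_range] at ha ha'
    simp [Nat.choose_eq_zero_of_lt (show j < a by omega)]
  calc ∑ j ∈ Finset.range (n+1), (-1:ℤ)^j * (n.choose j) * ((j+k).choose j)
      = ∑ j ∈ Finset.range (n+1), ∑ a ∈ Finset.range (n+1),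
          (k.choose a : ℤ) * ((-1:ℤ)^j * (n.choose j) * (j.choose a)) := by
        apply Finset.sum_congr rfl
        intro j hj
        rw [hV j hj]
        push_cast
        rw [Finset.mul_sum]
        apply Finset.sum_congr rfl
        intro a _
        ring
    _ = ∑ a ∈ Finset.range (n+1), (k.choose a : ℤ) *
          (∑ j ∈ Finset.range (n+1), (-1:ℤ)^j * (n.choose j) * (j.choose a)) := by
        rw [Finset.sum_comm]
        simp_rw [Finset.mul_sum]
    _ = ∑ a ∈ Finset.range (n+1), (k.choose a : ℤ) * (if a = n then (-1:ℤ)^n else 0) := by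
        simp_rw [lag_sum_I2]
    _ = (-1:ℤ)^n * (k.choose n) := by
        rw [Finset.sum_eq_single n]
        · simp [mul_comm]
        · intro a _ ha; simp [ha]
        · intro h; exact absurd (Finset.self_mem_range_succ n) h

lemma lag_sum_I0 (n : ℕ) :
    ∑ k ∈ Finset.range (n+1), ∑ j ∈ Finset.range (n+1),
      (-1:ℤ)^(j+k) * (n.choose j) * (n.choose k) * ((j+k).choose j) = 1 := by
  have hinner : ∀ k ∈ Finset.range (n+1),
      ∑ j ∈ Finset.range (n+1), (-1:ℤ)^(j+k) * (n.choose j) * (n.choose k) * ((j+k).choose j)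
        = ((-1:ℤ)^k * (n.choose k)) * ((-1:ℤ)^n * (k.choose n)) := by
    intro k _
    rw [← lag_sum_I1 n k, Finset.mul_sum]
    apply Finset.sum_congr rfl
    intro j _
    rw [pow_add]
    ring
  rw [Finset.sum_congr rfl hinner, Finset.sum_eq_single n]
  · simp [← pow_add, Even.neg_one_pow ⟨n, rfl⟩]
  · intro a ha hne
    simp only [Finset.mem_range] at ha
    have : a < n := by omega
    simp [Nat.choose_eq_zero_of_lt this]
  · intro h; exact absurd (Finset.self_mem_range_succ n) h

lemma lag_real_identity (n : ℕ) :
    ∑ k ∈ Finset.range (n+1), ∑ j ∈ Finset.range (n+1),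
      (-1:ℝ)^(j+k) * (n.choose j) * (n.choose k) * (j+k).factorial
        / (j.factorial * k.factorial) = 1 := by
  have h := lag_sum_I0 n
  have hcast : ∀ j k : ℕ,
      (-1:ℝ)^(j+k) * (n.choose j) * (n.choose k) * (j+k).factorial
        / (j.factorial * k.factorial)
      = ((-1:ℤ)^(j+k) * (n.choose j) * (n.choose k) * ((j+k).choose j) : ℤ) := by
    intro j k
    have hfac : ((j+k).choose j : ℝ) * (j.factorial : ℝ) * (k.factorial : ℝ)
        = ((j+k).factorial : ℝ) := by
      rw_mod_cast [← Nat.add_choose_mul_factorial_mul_factorial j k]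
      rw [Nat.choose_symm_add]
      try push_cast
      try ring
    push_cast
    rw [← hfac]
    have h1 : (j.factorial : ℝ) ≠ 0 := Nat.cast_ne_zero.mpr (Nat.factorial_ne_zero _)
    have h2 : (k.factorial : ℝ) ≠ 0 := Nat.cast_ne_zero.mpr (Nat.factorial_ne_zero _)
    field_simp
    try ring
  simp_rw [hcast]
  exact_mod_cast h


lemma lag_J_int (m : ℕ) :
    IntegrableOn (fun t : ℝ => t^m * Real.exp (-2*t)) (Ioi (0:ℝ)) := by
  have h := integrableOn_rpow_mul_exp_neg_mul_rpow
    (show (-1:ℝ) < (m:ℝ) from lt_of_lt_of_le (by norm_num) (Nat.cast_nonneg m))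
    (show (0:ℝ) < 1 by norm_num) (show (0:ℝ) < 2 by norm_num)
  refine h.congr_fun ?_ measurableSet_Ioi
  intro t ht
  simp only [Real.rpow_one, Real.rpow_natCast]

lemma lag_J_val (m : ℕ) :
    ∫ t in Ioi (0:ℝ), t^m * Real.exp (-2*t) = (m.factorial : ℝ) / 2^(m+1) := by
  have h := Real.integral_rpow_mul_exp_neg_mul_Ioi
    (show (0:ℝ) < (m:ℝ) + 1 by positivity) (show (0:ℝ) < 2 by norm_num)
  have heq : ∀ t ∈ Ioi (0:ℝ),
      t ^ ((m:ℝ) + 1 - 1) * Real.exp (-(2*t)) = t^m * Real.exp (-2*t) := by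
    intro t ht
    rw [show (m:ℝ) + 1 - 1 = (m:ℝ) by ring, Real.rpow_natCast, neg_mul]
  rw [setIntegral_congr_fun measurableSet_Ioi heq] at h
  rw [h, show ((m:ℝ)+1) = ((m+1:ℕ):ℝ) by push_cast; ring, Real.rpow_natCast,
    Nat.cast_add, Nat.cast_one, Real.Gamma_nat_eq_factorial, div_pow, one_pow]
  ring

lemma lagPhi_continuous (n : ℕ) : Continuous (lagPhi n) := by
  unfold lagPhi lagL
  fun_prop

noncomputable def lagE (n k : ℕ) : ℝ := (n.choose (n-k) : ℝ) * (-2:ℝ)^k / (k.factorial : ℝ)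

lemma lagPhi_sq_expand (n : ℕ) (ξ : ℝ) :
    (lagPhi n ξ)^2 = ∑ k ∈ Finset.range (n+1), ∑ j ∈ Finset.range (n+1),
      (lagE n k * lagE n j) * (ξ^(k+j) * Real.exp (-2*ξ)) := by
  have hL : lagL n (2*ξ) = ∑ k ∈ Finset.range (n+1), lagE n k * ξ^k := by
    unfold lagL lagE
    apply Finset.sum_congr rfl
    intro k _
    rw [neg_mul_eq_neg_mul]
    rw [mul_pow]
    ring
  have hexp : Real.exp (-ξ)^2 = Real.exp (-2*ξ) := by
    rw [← Real.exp_nat_mul]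
    norm_num
  unfold lagPhi
  rw [mul_pow, hL, hexp, sq, Finset.sum_mul_sum, Finset.mul_sum]
  apply Finset.sum_congr rfl
  intro k _
  rw [Finset.mul_sum]
  apply Finset.sum_congr rfl
  intro j _
  rw [pow_add]
  ring

lemma lagPhi_sq_integrable (n : ℕ) :
    IntegrableOn (fun ξ : ℝ => (lagPhi n ξ)^2) (Ioi (0:ℝ)) := by
  have : IntegrableOn (fun ξ : ℝ => ∑ k ∈ Finset.range (n+1), ∑ j ∈ Finset.range (n+1),
      (lagE n k * lagE n j) * (ξ^(k+j) * Real.exp (-2*ξ))) (Ioi (0:ℝ)) := by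
    apply integrable_finset_sum
    intro k _
    apply integrable_finset_sum
    intro j _
    exact (lag_J_int (k+j)).const_mul _
  exact this.congr_fun (fun ξ _ => (lagPhi_sq_expand n ξ).symm) measurableSet_Ioi

lemma lagPhi_sq_integral (n : ℕ) :
    ∫ ξ in Ioi (0:ℝ), (lagPhi n ξ)^2 = 1/2 := by
  have h1 : ∫ ξ in Ioi (0:ℝ), (lagPhi n ξ)^2
      = ∑ k ∈ Finset.range (n+1), ∑ j ∈ Finset.range (n+1),
        (lagE n k * lagE n j) * (((k+j).factorial : ℝ) / 2^(k+j+1)) := by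
    rw [setIntegral_congr_fun measurableSet_Ioi (fun ξ _ => lagPhi_sq_expand n ξ)]
    rw [integral_finset_sum _ (fun k _ => integrable_finset_sum _
      (fun j _ => (lag_J_int (k+j)).const_mul _))]
    apply Finset.sum_congr rfl
    intro k _
    rw [integral_finset_sum _ (fun j _ => (lag_J_int (k+j)).const_mul _)]
    apply Finset.sum_congr rfl
    intro j _
    rw [integral_const_mul, lag_J_val]
  rw [h1]
  have h2 := lag_real_identity n
  have hstep : ∀ k ∈ Finset.range (n+1), ∀ j ∈ Finset.range (n+1),
      (lagE n k * lagE n j) * (((k+j).factorial : ℝ) / 2^(k+j+1))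
      = 1/2 * ((-1:ℝ)^(j+k) * (n.choose j) * (n.choose k) * (j+k).factorial
        / (j.factorial * k.factorial)) := by
    intro k hk j hj
    simp only [Finset.mem_range] at hk hj
    unfold lagE
    rw [Nat.choose_symm (by omega : k ≤ n), Nat.choose_symm (by omega : j ≤ n)]
    rw [show k+j = j+k from Nat.add_comm k j]
    have h1' : (j.factorial : ℝ) ≠ 0 := Nat.cast_ne_zero.mpr (Nat.factorial_ne_zero _)
    have h2' : (k.factorial : ℝ) ≠ 0 := Nat.cast_ne_zero.mpr (Nat.factorial_ne_zero _)
    have h3' : (2:ℝ)^j ≠ 0 := by positivity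
    have h4' : (2:ℝ)^k ≠ 0 := by positivity
    simp only [show ((-2:ℝ)) = (-1)*2 from by norm_num, mul_pow, pow_add, pow_one]
    field_simp
  calc ∑ k ∈ Finset.range (n+1), ∑ j ∈ Finset.range (n+1),
        (lagE n k * lagE n j) * (((k+j).factorial : ℝ) / 2^(k+j+1))
      = ∑ k ∈ Finset.range (n+1), ∑ j ∈ Finset.range (n+1),
        1/2 * ((-1:ℝ)^(j+k) * (n.choose j) * (n.choose k) * (j+k).factorial
          / (j.factorial * k.factorial)) := by
        apply Finset.sum_congr rfl
        intro k hk
        apply Finset.sum_congr rfl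
        intro j hj
        exact hstep k hk j hj
    _ = 1/2 := by
        simp_rw [← Finset.mul_sum]
        rw [h2, mul_one]

open Finset Filter

-- the elementary bound  C(n,k) x^k / k! ≤ (2√(nx))^(2k) / (2k)!
lemma lag_term_bound (n k : ℕ) {x : ℝ} (hx : 0 ≤ x) :
    (n.choose k : ℝ) * x^k / (k.factorial : ℝ)
      ≤ (2 * Real.sqrt (n * x))^(2*k) / ((2*k).factorial : ℝ) := by
  have hfac : ((2*k).factorial : ℝ) ≤ 4^k * ((k.factorial : ℝ) * (k.factorial : ℝ)) := by
    have h1 : ((2*k).choose k) * k.factorial * k.factorial = (2*k).factorial := by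
      have := Nat.add_choose_mul_factorial_mul_factorial k k
      rw [show k + k = 2*k from by ring] at this
      exact this
    have h2 : ((2*k).choose k) ≤ 4^k := by
      calc ((2*k).choose k) ≤ ∑ i ∈ Finset.range (2*k+1), (2*k).choose i :=
            Finset.single_le_sum (fun i _ => Nat.zero_le _)
              (by simp [Finset.mem_range]; omega)
        _ = 2^(2*k) := Nat.sum_range_choose (2*k)
        _ = 4^k := by rw [pow_mul]; norm_num
    calc ((2*k).factorial : ℝ) = ((2*k).choose k : ℝ) * k.factorial * k.factorial := by
          exact_mod_cast congrArg (Nat.cast : ℕ → ℝ) h1.symm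
      _ ≤ 4^k * ((k.factorial : ℝ) * (k.factorial : ℝ)) := by
          have : ((2*k).choose k : ℝ) ≤ 4^k := by exact_mod_cast h2
          nlinarith [(by positivity : (0:ℝ) < (k.factorial:ℝ))]
  have hch : (n.choose k : ℝ) ≤ (n:ℝ)^k / (k.factorial : ℝ) := Nat.choose_le_pow_div k n
  have hy : (2 * Real.sqrt (n * x))^(2*k) = 4^k * ((n:ℝ)^k * x^k) := by
    rw [pow_mul]
    have : (2 * Real.sqrt (n * x))^2 = 4 * ((n:ℝ) * x) := by
      rw [mul_pow, Real.sq_sqrt (by positivity)]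
      norm_num
    rw [this, mul_pow, mul_pow]
  rw [hy]
  have hk1 : (0:ℝ) < k.factorial := by exact_mod_cast Nat.factorial_pos k
  have hk2 : (0:ℝ) < (2*k).factorial := by exact_mod_cast Nat.factorial_pos (2*k)
  rw [div_le_div_iff₀ hk1 hk2]
  calc (n.choose k : ℝ) * x^k * (2*k).factorial
      ≤ ((n:ℝ)^k / k.factorial) * x^k * (4^k * (k.factorial * k.factorial)) := by
        apply mul_le_mul
        · apply mul_le_mul_of_nonneg_right hch (by positivity)
        · exact hfac
        · exact hk2.le
        · positivity
    _ = 4^k * ((n:ℝ)^k * x^k) * k.factorial := by field_simp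
  
lemma lag_even_sum_le_exp {y : ℝ} (hy : 0 ≤ y) (n : ℕ) :
    ∑ k ∈ Finset.range (n+1), y^(2*k) / ((2*k).factorial : ℝ) ≤ Real.exp y := by
  have himg : ∑ k ∈ Finset.range (n+1), y^(2*k) / ((2*k).factorial : ℝ)
      = ∑ j ∈ (Finset.range (n+1)).image (fun k => 2*k), y^j / (j.factorial : ℝ) := by
    rw [Finset.sum_image (by intro a _ b _ h; simp only at h; omega)]
  rw [himg]
  calc ∑ j ∈ (Finset.range (n+1)).image (fun k => 2*k), y^j / (j.factorial : ℝ)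
      ≤ ∑ j ∈ Finset.range (2*n+2), y^j / (j.factorial : ℝ) := by
        apply Finset.sum_le_sum_of_subset_of_nonneg
        · intro j hj
          simp only [Finset.mem_image, Finset.mem_range] at hj ⊢
          obtain ⟨a, ha, rfl⟩ := hj
          omega
        · intro j _ _
          positivity
    _ ≤ Real.exp y := Real.sum_le_exp_of_nonneg hy _

lemma lag_amgm {x : ℝ} (hx : 0 ≤ x) {d : ℝ} (hd : 0 < d) (n : ℕ) :
    2 * Real.sqrt (n * x) ≤ d * n + x / d := by
  have h1 : Real.sqrt (n * x) = Real.sqrt (d * n) * Real.sqrt (x / d) := by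
    rw [← Real.sqrt_mul (by positivity)]
    congr 1
    field_simp
  rw [h1]
  calc 2 * (Real.sqrt (d*n) * Real.sqrt (x/d))
      ≤ Real.sqrt (d*n)^2 + Real.sqrt (x/d)^2 := by
        have := two_mul_le_add_sq (Real.sqrt (d*n)) (Real.sqrt (x/d))
        linarith
    _ = d * n + x / d := by
        rw [Real.sq_sqrt (by positivity), Real.sq_sqrt (by positivity)]

lemma lag_gen (t : ℂ) (ht : ‖t‖ < 1) (x : ℝ) (hx : 0 ≤ x) :
    HasSum (fun n : ℕ => t^n * (lagL n x : ℂ))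
      ((1 - t)⁻¹ * Complex.exp (-x * t / (1 - t))) := by
  classical
  set F : ℕ × ℕ → ℂ := fun p =>
    if p.2 ≤ p.1 then t^p.1 * (((p.1.choose (p.1 - p.2) : ℝ) * (-x)^p.2 / (p.2.factorial : ℝ) : ℝ) : ℂ)
    else 0 with hF
  -- rows
  have hrow : ∀ n : ℕ, HasSum (fun k => F (n,k)) (t^n * (lagL n x : ℂ)) := by
    intro n
    have h0 : ∀ k ∉ Finset.range (n+1), F (n,k) = 0 := by
      intro k hk
      simp only [Finset.mem_range] at hk
      simp only [hF, if_neg (by omega : ¬ k ≤ n)]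
    have : HasSum (fun k => F (n,k)) (∑ k ∈ Finset.range (n+1), F (n,k)) := hasSum_sum_of_ne_finset_zero h0
    convert this using 1
    unfold lagL
    push_cast
    rw [Finset.mul_sum]
    apply Finset.sum_congr rfl
    intro k hk
    simp only [Finset.mem_range] at hk
    simp only [hF, if_pos (by omega : k ≤ n)]
    push_cast
    ring
  -- columns
  have hcol : ∀ k : ℕ, HasSum (fun n => F (n,k))
      ((t^k * ((-x : ℂ))^k / (k.factorial : ℝ)) * (1/(1-t)^(k+1))) := by
    intro k
    have hG := hasSum_choose_mul_geometric_of_norm_lt_one (𝕜 := ℂ) k ht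
    have hshift : HasSum (fun m => F (m+k, k))
        ((t^k * ((-x : ℂ))^k / (k.factorial : ℝ)) * (1/(1-t)^(k+1))) := by
      have := hG.mul_left (t^k * ((-x : ℂ))^k / (k.factorial : ℝ))
      convert this using 2 with m
      · exact rfl
      simp only [hF, if_pos (Nat.le_add_left k m)]
      rw [Nat.add_sub_cancel, Nat.choose_symm_add]
      push_cast
      rw [pow_add]
      ring
    have := (hasSum_nat_add_iff (f := fun n => F (n,k)) k).mp hshift
    have hz : ∑ i ∈ Finset.range k, F (i, k) = 0 := by
      apply Finset.sum_eq_zero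
      intro i hi
      simp only [Finset.mem_range] at hi
      simp only [hF, if_neg (by omega : ¬ k ≤ i)]
    rwa [hz, add_zero] at this
  -- summability
  have hFsum : Summable F := by
    apply Summable.of_norm
    set r := ‖t‖ with hr
    have hr0 : 0 ≤ r := norm_nonneg t
    set d : ℝ := (1 - r)/2 with hd
    have hd0 : 0 < d := by rw [hd]; linarith
    have hq : r * Real.exp d < 1 := by
      have h3 : (0:ℝ) < 1 - d := by rw [hd]; linarith
      have h1 : Real.exp d ≤ (1 - d)⁻¹ := by
        have h2 : 1 - d ≤ Real.exp (-d) := by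
          have := Real.add_one_le_exp (-d)
          linarith
        rw [Real.exp_neg] at h2
        rw [inv_eq_one_div, le_div_iff₀ h3]
        have hmul := mul_le_mul_of_nonneg_left h2 (Real.exp_pos d).le
        rw [mul_inv_cancel₀ (Real.exp_pos d).ne'] at hmul
        linarith
      calc r * Real.exp d ≤ r * (1-d)⁻¹ := by
            apply mul_le_mul_of_nonneg_left h1 hr0
        _ < 1 := by
            rw [mul_inv_lt_iff₀ h3] -- r < 1 - d
            rw [hd]; linarith
    apply (summable_prod_of_nonneg (fun p => norm_nonneg (F p))).mpr
    constructor
    · intro n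
      apply summable_of_ne_finset_zero (s := Finset.range (n+1))
      intro k hk
      simp only [Finset.mem_range] at hk
      simp only [hF, if_neg (by omega : ¬ k ≤ n), norm_zero]
    · -- bound the row sums
      have hbound : ∀ n : ℕ, ∑' k, ‖F (n,k)‖ ≤ Real.exp (x/d) * (r * Real.exp d)^n := by
        intro n
        have hts : ∑' k, ‖F (n,k)‖ = ∑ k ∈ Finset.range (n+1), ‖F (n,k)‖ := by
          apply tsum_eq_sum
          intro k hk
          simp only [Finset.mem_range] at hk
          simp only [hF, if_neg (by omega : ¬ k ≤ n), norm_zero]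
        rw [hts]
        have hterm : ∀ k ∈ Finset.range (n+1),
            ‖F (n,k)‖ ≤ r^n * ((2 * Real.sqrt (n * x))^(2*k) / ((2*k).factorial : ℝ)) := by
          intro k hk
          simp only [Finset.mem_range] at hk
          simp only [hF, if_pos (by omega : k ≤ n)]
          rw [norm_mul, norm_pow, Complex.norm_real]
          have h1 : |( (n.choose (n - k) : ℝ) * (-x)^k / (k.factorial : ℝ))|
              = (n.choose k : ℝ) * x^k / (k.factorial : ℝ) := by
            rw [Nat.choose_symm (by omega : k ≤ n)]
            rw [abs_div, abs_mul, abs_pow, abs_neg, abs_of_nonneg hx]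
            rw [abs_of_nonneg (by positivity : (0:ℝ) ≤ (n.choose k : ℝ)),
               abs_of_nonneg (by positivity : (0:ℝ) ≤ (k.factorial : ℝ))]
          rw [Real.norm_eq_abs, h1]
          exact mul_le_mul_of_nonneg_left (lag_term_bound n k hx) (by positivity)
        calc ∑ k ∈ Finset.range (n+1), ‖F (n,k)‖
            ≤ ∑ k ∈ Finset.range (n+1), r^n * ((2 * Real.sqrt (n * x))^(2*k) / ((2*k).factorial : ℝ)) :=
              Finset.sum_le_sum hterm
          _ = r^n * ∑ k ∈ Finset.range (n+1), (2 * Real.sqrt (n * x))^(2*k) / ((2*k).factorial : ℝ) := by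
              rw [Finset.mul_sum]
          _ ≤ r^n * Real.exp (2 * Real.sqrt (n * x)) := by
              apply mul_le_mul_of_nonneg_left (lag_even_sum_le_exp (by positivity) n) (by positivity)
          _ ≤ r^n * Real.exp (d * n + x / d) := by
              apply mul_le_mul_of_nonneg_left _ (by positivity)
              exact Real.exp_le_exp.mpr (lag_amgm hx hd0 n)
          _ = Real.exp (x/d) * (r * Real.exp d)^n := by
              rw [Real.exp_add, mul_pow, ← Real.exp_nat_mul]
              ring_nf
        done
      apply Summable.of_nonneg_of_le (fun n => tsum_nonneg (fun k => norm_nonneg _)) hbound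
      apply Summable.mul_left
      exact summable_geometric_of_lt_one (by positivity) hq
  -- put it together
  have hS := hFsum.hasSum
  have h1 : HasSum (fun n => t^n * (lagL n x : ℂ)) (∑' p, F p) :=
    hS.prod_fiberwise hrow
  have hswap : HasSum (fun p : ℕ × ℕ => F p.swap) (∑' p, F p) :=
    ((Equiv.prodComm ℕ ℕ).hasSum_iff).mpr hS
  have h2 : HasSum (fun k => (t^k * ((-x : ℂ))^k / (k.factorial : ℝ)) * (1/(1-t)^(k+1)))
      (∑' p, F p) :=
    hswap.prod_fiberwise (fun k => hcol k)
  have ht1 : (1:ℂ) - t ≠ 0 := by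
    intro h
    have : ‖(1:ℂ)‖ = ‖t‖ := by rw [show t = 1 from by linear_combination -h]
    simp at this
    rw [this] at ht
    exact lt_irrefl _ ht
  have h3 : HasSum (fun k => (t^k * ((-x : ℂ))^k / (k.factorial : ℝ)) * (1/(1-t)^(k+1)))
      ((1 - t)⁻¹ * Complex.exp (-x * t / (1 - t))) := by
    have he := (NormedSpace.expSeries_div_hasSum_exp ((-x : ℂ) * t / (1 - t))).mul_left (1 - t)⁻¹
    rw [← Complex.exp_eq_exp_ℂ] at he
    convert he using 2 with k
    · exact rfl
    rw [div_pow, mul_pow]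
    field_simp
    push_cast
    ring
  rwa [h2.unique h3] at h1

lemma lag_b1_ne (b : ℂ) (hb : 0 < b.re) : b + 1 ≠ 0 := by
  intro h
  have : (b + 1).re = 0 := by rw [h]; simp
  simp only [Complex.add_re, Complex.one_re] at this
  linarith

lemma lag_c_norm_lt (b : ℂ) (hb : 0 < b.re) : ‖(b-1)/(b+1)‖ < 1 := by
  rw [norm_div, div_lt_one (norm_pos_iff.mpr (lag_b1_ne b hb))]
  have h : ‖b-1‖^2 < ‖b+1‖^2 := by
    rw [Complex.sq_norm, Complex.sq_norm]
    simp only [Complex.normSq_apply, Complex.sub_re, Complex.sub_im, Complex.add_re,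
      Complex.add_im, Complex.one_re, Complex.one_im]
    nlinarith
  nlinarith [norm_nonneg (b-1), norm_nonneg (b+1)]

lemma lag_pointwise (b : ℂ) (hb : 0 < b.re) (ξ : ℝ) (hξ : 0 ≤ ξ) :
    HasSum (fun n : ℕ => 2 / (b + 1) * ((b - 1) / (b + 1)) ^ n * (lagPhi n ξ : ℂ))
      (Complex.exp (-b * ξ)) := by
  set c : ℂ := (b - 1) / (b + 1) with hc
  have hb1 : b + 1 ≠ 0 := lag_b1_ne b hb
  have hcnorm : ‖c‖ < 1 := lag_c_norm_lt b hb
  have h := lag_gen c hcnorm (2*ξ) (by linarith)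
  have h1c : (1:ℂ) - c = 2/(b+1) := by
    rw [hc]
    field_simp
    norm_num
  have h1c' : (1:ℂ) - c ≠ 0 := by
    rw [h1c]
    simp [hb1]
  have h' := h.mul_left (2/(b+1) * Complex.exp (-(ξ:ℂ)))
  have hfun : ∀ n : ℕ, 2/(b+1) * Complex.exp (-(ξ:ℂ)) * (c^n * ((lagL n (2*ξ) : ℝ) : ℂ))
      = 2 / (b + 1) * c ^ n * (lagPhi n ξ : ℂ) := by
    intro n
    unfold lagPhi
    push_cast
    ring
  have hval : 2/(b+1) * Complex.exp (-(ξ:ℂ)) *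
      ((1 - c)⁻¹ * Complex.exp (-(2*ξ : ℝ) * c / (1 - c))) = Complex.exp (-b * ξ) := by
    have e1 : 2/(b+1) * (1 - c)⁻¹ = 1 := by
      rw [h1c]
      field_simp
    have e2 : (-(2*ξ : ℝ) : ℂ) * c / (1 - c) = -(b-1) * ξ := by
      rw [h1c, hc]
      push_cast
      field_simp
    calc 2/(b+1) * Complex.exp (-(ξ:ℂ)) * ((1 - c)⁻¹ * Complex.exp (-(2*ξ : ℝ) * c / (1 - c)))
        = (2/(b+1) * (1 - c)⁻¹) * (Complex.exp (-(ξ:ℂ)) * Complex.exp ((-(2*ξ : ℝ) : ℂ) * c / (1 - c))) := by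
          ring
      _ = Complex.exp (-(ξ:ℂ)) * Complex.exp (-(b-1) * ξ) := by
          rw [e1, e2, one_mul]
      _ = Complex.exp (-b * ξ) := by
          rw [← Complex.exp_add]
          congr 1
          ring
  rw [← hval]
  convert h' using 1
  · exact rfl
  funext n
  exact (hfun n).symm

open scoped ENNReal

theorem exp_laguerre_expansion (b : ℂ) (hb : 0 < b.re) :
    (∀ ξ : ℝ, 0 ≤ ξ →
      HasSum (fun n : ℕ => 2 / (b + 1) * ((b - 1) / (b + 1)) ^ n * (lagPhi n ξ : ℂ))
        (Complex.exp (-b * ξ))) ∧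
    Filter.Tendsto (fun N : ℕ =>
        eLpNorm (fun ξ : ℝ => Complex.exp (-b * ξ)
          - ∑ n ∈ Finset.range (N + 1),
              2 / (b + 1) * ((b - 1) / (b + 1)) ^ n * (lagPhi n ξ : ℂ)) 2
          (volume.restrict (Ioi (0:ℝ))))
      Filter.atTop (nhds 0) := by
  refine ⟨fun ξ hξ => lag_pointwise b hb ξ hξ, ?_⟩
  haveI : Fact ((1:ℝ≥0∞) ≤ 2) := ⟨one_le_two⟩
  set μ := volume.restrict (Ioi (0:ℝ)) with hμ
  set c : ℂ := (b - 1) / (b + 1) with hc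
  set f : ℕ → ℝ → ℂ := fun n ξ => 2 / (b + 1) * c ^ n * (lagPhi n ξ : ℂ) with hf
  set g : ℝ → ℂ := fun ξ => Complex.exp (-b * ξ) with hg
  have hcnorm : ‖c‖ < 1 := lag_c_norm_lt b hb
  -- φₙ is in L²(μ) with norm at most one
  have hphi_eLp : ∀ n, eLpNorm (fun ξ : ℝ => (lagPhi n ξ : ℂ)) 2 μ ≤ 1 := by
    intro n
    have h1 : eLpNorm (fun ξ : ℝ => (lagPhi n ξ : ℂ)) 2 μ = eLpNorm (lagPhi n) 2 μ := by
      rw [← eLpNorm_norm (fun ξ : ℝ => (lagPhi n ξ : ℂ)), ← eLpNorm_norm (lagPhi n)]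
      congr 1
      funext ξ
      simp [Complex.norm_real]
    rw [h1, eLpNorm_eq_lintegral_rpow_enorm_toReal (by norm_num) (by norm_num)]
    have h2 : ∫⁻ ξ, ‖lagPhi n ξ‖ₑ ^ (2:ℝ≥0∞).toReal ∂μ = ENNReal.ofReal (1/2) := by
      have hpt : ∀ ξ : ℝ, ‖lagPhi n ξ‖ₑ ^ (2:ℝ≥0∞).toReal
          = ENNReal.ofReal ((lagPhi n ξ)^2) := by
        intro ξ
        rw [Real.enorm_eq_ofReal_abs, ENNReal.toReal_ofNat,
          ENNReal.ofReal_rpow_of_nonneg (abs_nonneg _) (by norm_num : (0:ℝ) ≤ 2)]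
        congr 1
        rw [show ((2:ℝ)) = ((2:ℕ):ℝ) from by norm_num, Real.rpow_natCast, sq_abs]
      simp_rw [hpt]
      rw [← ofReal_integral_eq_lintegral_ofReal]
      · rw [← lagPhi_sq_integral n]
      · exact lagPhi_sq_integrable n
      · exact Filter.Eventually.of_forall (fun ξ => sq_nonneg _)
    rw [h2]
    apply ENNReal.rpow_le_one
    · exact ENNReal.ofReal_le_one.mpr (by norm_num)
    · positivity
  have hphi_mem : ∀ n, MemLp (fun ξ : ℝ => (lagPhi n ξ : ℂ)) 2 μ := by
    intro n
    refine ⟨(Complex.continuous_ofReal.comp (lagPhi_continuous n)).aestronglyMeasurable, ?_⟩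
    exact lt_of_le_of_lt (hphi_eLp n) ENNReal.one_lt_top
  have hfmem : ∀ n, MemLp (f n) 2 μ := fun n => (hphi_mem n).const_mul _
  have hf_eLp : ∀ n, eLpNorm (f n) 2 μ ≤ (‖2 / (b + 1) * c ^ n‖₊ : ℝ≥0∞) := by
    intro n
    have heq : f n = (2 / (b + 1) * c ^ n) • (fun ξ : ℝ => (lagPhi n ξ : ℂ)) := by
      funext ξ
      simp [hf, smul_eq_mul]
    rw [heq, eLpNorm_const_smul]
    calc (‖2 / (b + 1) * c ^ n‖₊ : ℝ≥0∞) * eLpNorm (fun ξ : ℝ => (lagPhi n ξ : ℂ)) 2 μ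
        ≤ (‖2 / (b + 1) * c ^ n‖₊ : ℝ≥0∞) * 1 := by
          exact mul_le_mul_right (hphi_eLp n) _
      _ = (‖2 / (b + 1) * c ^ n‖₊ : ℝ≥0∞) := mul_one _
  set F : ℕ → Lp ℂ 2 μ := fun n => (hfmem n).toLp (f n) with hFdef
  have hnorm : ∀ n, ‖F n‖ ≤ ‖2 / (b + 1)‖ * ‖c‖^n := by
    intro n
    rw [hFdef, Lp.norm_toLp]
    calc (eLpNorm (f n) 2 μ).toReal
        ≤ ((‖2 / (b + 1) * c ^ n‖₊ : ℝ≥0∞)).toReal :=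
          ENNReal.toReal_mono ENNReal.coe_ne_top (hf_eLp n)
      _ = ‖2 / (b + 1) * c ^ n‖ := by simp
      _ = ‖2 / (b + 1)‖ * ‖c‖^n := by rw [norm_mul, norm_pow]
  have hsum : Summable F :=
    Summable.of_norm_bounded ((summable_geometric_of_lt_one (norm_nonneg c) hcnorm).mul_left
      (‖2 / (b + 1)‖)) hnorm
  set G : Lp ℂ 2 μ := ∑' n, F n with hGdef
  have hG : HasSum F G := hsum.hasSum
  set P : ℕ → Lp ℂ 2 μ := fun N => ∑ n ∈ Finset.range (N+1), F n with hPdef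
  have hPtend : Filter.Tendsto P Filter.atTop (nhds G) := by
    have h := hG.tendsto_sum_nat
    exact h.comp (Filter.tendsto_add_atTop_nat 1)
  -- coercion of partial sums
  have hcoe : ∀ M : ℕ, (⇑(∑ n ∈ Finset.range M, F n) : ℝ → ℂ)
      =ᵐ[μ] (fun ξ => ∑ n ∈ Finset.range M, f n ξ) := by
    intro M
    induction M with
    | zero => simpa [Pi.zero_def] using Lp.coeFn_zero (E := ℂ) (p := 2) (μ := μ)
    | succ M ih =>
      rw [Finset.sum_range_succ]
      filter_upwards [Lp.coeFn_add (∑ n ∈ Finset.range M, F n) (F M), ih,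
        (hfmem M).coeFn_toLp] with ξ h1 h2 h3
      rw [h1]
      simp only [Pi.add_apply, h2, h3, Finset.sum_range_succ]
      exact congrArg (fun z => ∑ n ∈ Finset.range M, f n ξ + z) h3
  -- convergence of eLpNorms
  have heq : ∀ N, eLpNorm ((⇑(P N) : ℝ → ℂ) - ⇑G) 2 μ = ENNReal.ofReal ‖P N - G‖ := by
    intro N
    rw [Lp.norm_def, ENNReal.ofReal_toReal (Lp.eLpNorm_ne_top _)]
    exact eLpNorm_congr_ae (Lp.coeFn_sub (P N) G).symm
  have hnormtend : Filter.Tendsto (fun N => ‖P N - G‖) Filter.atTop (nhds 0) := by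
    rw [← tendsto_iff_norm_sub_tendsto_zero]
    exact hPtend
  have hofReal : Filter.Tendsto (fun N => ENNReal.ofReal ‖P N - G‖) Filter.atTop (nhds 0) := by
    have h0 : (nhds (0:ℝ≥0∞)) = nhds (ENNReal.ofReal 0) := by simp
    rw [h0]
    exact (ENNReal.continuous_ofReal.tendsto 0).comp hnormtend
  -- identify G with g a.e.
  have htim : TendstoInMeasure μ (fun N => (⇑(P N) : ℝ → ℂ)) Filter.atTop ⇑G := by
    apply tendstoInMeasure_of_tendsto_eLpNorm (p := (2:ℝ≥0∞)) (by norm_num)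
      (fun N => Lp.aestronglyMeasurable (P N)) (Lp.aestronglyMeasurable G)
    simpa only [heq] using hofReal
  obtain ⟨ns, hns, hae⟩ := htim.exists_seq_tendsto_ae
  have hGg : (⇑G : ℝ → ℂ) =ᵐ[μ] g := by
    have hmem0 : ∀ᵐ ξ ∂μ, ξ ∈ Ioi (0:ℝ) := ae_restrict_mem measurableSet_Ioi
    filter_upwards [ae_all_iff.mpr (fun N => hcoe (N+1)), hae, hmem0] with ξ h1 h2 h3
    have hps : Filter.Tendsto (fun N => ∑ n ∈ Finset.range (N+1), f n ξ)
        Filter.atTop (nhds (g ξ)) := by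
      have := (lag_pointwise b hb ξ (le_of_lt h3)).tendsto_sum_nat
      exact this.comp (Filter.tendsto_add_atTop_nat 1)
    have hsub : Filter.Tendsto (fun i => ∑ n ∈ Finset.range (ns i + 1), f n ξ)
        Filter.atTop (nhds (g ξ)) := hps.comp hns.tendsto_atTop
    have h2' : Filter.Tendsto (fun i => ∑ n ∈ Finset.range (ns i + 1), f n ξ)
        Filter.atTop (nhds (⇑G ξ)) := by
      have : (fun i => ∑ n ∈ Finset.range (ns i + 1), f n ξ)
          = fun i => (⇑(P (ns i)) : ℝ → ℂ) ξ := by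
        funext i
        exact (h1 (ns i)).symm
      rw [this]
      exact h2
    exact tendsto_nhds_unique h2' hsub
  -- final convergence
  have hfinal : ∀ N, eLpNorm (fun ξ => g ξ - ∑ n ∈ Finset.range (N+1), f n ξ) 2 μ
      = ENNReal.ofReal ‖G - P N‖ := by
    intro N
    rw [Lp.norm_def, ENNReal.ofReal_toReal (Lp.eLpNorm_ne_top _)]
    apply eLpNorm_congr_ae
    filter_upwards [Lp.coeFn_sub G (P N), hGg, hcoe (N+1)] with ξ h1 h2 h3
    rw [← h2, ← h3, h1]
    rfl
  have : Filter.Tendsto (fun N => ENNReal.ofReal ‖G - P N‖) Filter.atTop (nhds 0) := by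
    have h0 : (nhds (0:ℝ≥0∞)) = nhds (ENNReal.ofReal 0) := by simp
    rw [h0]
    apply (ENNReal.continuous_ofReal.tendsto 0).comp
    exact hnormtend.congr (fun N => norm_sub_rev (P N) G)
  simp_rw [← hfinal] at this
  exact this
end

section
/- For every a ∈ ℂ \ ℝ_{≤0} and every n ∈ ℕ, α_{n,1}(a) = ∫₀^∞ ξ^n e^{−ξ} / (2a + ξ)^{n+1} dξ. -/
open MeasureTheory Set
open scoped ENNReal

/-- `α_{n,k}(a) = ∫₀^∞ e^{-ξ} (a+ξ)^{-k} φ_n(ξ) dξ`. -/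
noncomputable def lagAlpha (n k : ℕ) (a : ℂ) : ℂ :=
  ∫ ξ in Ioi (0:ℝ), Complex.exp (-(ξ:ℂ)) / (a + (ξ:ℂ)) ^ k * (lagPhi n ξ : ℂ)

/-- `lagP n m t` is `e^t · (d/dt)^m (t^n e^{-t})`. -/
noncomputable def lagP (n m : ℕ) (t : ℝ) : ℝ :=
  ∑ j ∈ Finset.range (m + 1),
    (m.choose j : ℝ) * (-1) ^ (m - j) * (n.descFactorial j : ℝ) * t ^ (n - j)

lemma lagP_zero (n : ℕ) (t : ℝ) : lagP n 0 t = t ^ n := by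
  simp [lagP]

lemma lagP_eval_zero {n m : ℕ} (h : m < n) : lagP n m 0 = 0 := by
  unfold lagP
  refine Finset.sum_eq_zero fun j hj => ?_
  rw [Finset.mem_range] at hj
  have : n - j ≠ 0 := Nat.sub_ne_zero_of_lt (lt_of_le_of_lt (Nat.lt_succ_iff.mp hj) h)
  rw [zero_pow this, mul_zero]

lemma lagP_succ_eq {n m : ℕ} (h : m < n) (t : ℝ) :
    lagP n (m + 1) t
      = (∑ j ∈ Finset.range (m + 1),
          (m.choose j : ℝ) * (-1) ^ (m - j) * (n.descFactorial j : ℝ)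
            * (((n - j : ℕ) : ℝ) * t ^ (n - j - 1)))
        - lagP n m t := by
  unfold lagP
  rw [Finset.sum_range_succ' (fun j => (( (m+1).choose j : ℝ) * (-1) ^ (m + 1 - j)
      * (n.descFactorial j : ℝ) * t ^ (n - j))) (m+1)]
  have key : ∀ j ∈ Finset.range (m + 1),
      ((m+1).choose (j+1) : ℝ) * (-1) ^ (m + 1 - (j+1)) * (n.descFactorial (j+1) : ℝ)
          * t ^ (n - (j+1))
        = ((m.choose j : ℝ) * (-1) ^ (m - j) * (n.descFactorial j : ℝ)
            * (((n - j : ℕ) : ℝ) * t ^ (n - j - 1)))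
          + ((m.choose (j+1) : ℝ) * ((-1) ^ (m - (j+1)) * (-1)) * (n.descFactorial (j+1) : ℝ)
            * t ^ (n - (j+1))) := by
    intro j hj
    rw [Finset.mem_range] at hj
    have hjm : j ≤ m := Nat.lt_succ_iff.mp hj
    have h1 : (m+1).choose (j+1) = m.choose j + m.choose (j+1) := Nat.choose_succ_succ m j
    have h2 : m + 1 - (j + 1) = m - j := by omega
    have h3 : n.descFactorial (j+1) = (n - j) * n.descFactorial j := Nat.descFactorial_succ n j
    have h4 : n - (j+1) = n - j - 1 := by omega
    rcases Nat.lt_or_ge (j+1) (m+1) with hc | hc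
    · have h5 : (-1 : ℝ) ^ (m - j) = (-1) ^ (m - (j+1)) * (-1) := by
        have : m - j = (m - (j+1)) + 1 := by omega
        rw [this, pow_succ]
      rw [h1, h2, h3, h4]
      rw [h5]; push_cast; ring
    · have hjm' : j = m := by omega
      subst hjm'
      rw [h1, h2, h3, h4]
      simp [Nat.choose_succ_self]
      ring
  rw [Finset.sum_congr rfl key, Finset.sum_add_distrib]
  have e0 : ((m+1).choose 0 : ℝ) * (-1) ^ (m + 1 - 0) * (n.descFactorial 0 : ℝ) * t ^ (n - 0)
      = -((m.choose 0 : ℝ) * (-1) ^ (m - 0) * (n.descFactorial 0 : ℝ) * t ^ (n - 0)) := by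
    simp [pow_succ]
  rw [e0]
  have e1 : (∑ j ∈ Finset.range (m+1),
      (m.choose (j+1) : ℝ) * ((-1) ^ (m - (j+1)) * (-1)) * (n.descFactorial (j+1) : ℝ)
        * t ^ (n - (j+1)))
      - ((m.choose 0 : ℝ) * (-1) ^ (m - 0) * (n.descFactorial 0 : ℝ) * t ^ (n - 0))
      = - ∑ j ∈ Finset.range (m+1),
          (m.choose j : ℝ) * (-1) ^ (m - j) * (n.descFactorial j : ℝ) * t ^ (n - j) := by
    rw [Finset.sum_range_succ' (fun j => (m.choose j : ℝ) * (-1) ^ (m - j)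
        * (n.descFactorial j : ℝ) * t ^ (n - j)) m]
    rw [Finset.sum_range_succ (fun j => (m.choose (j+1) : ℝ) * ((-1) ^ (m - (j+1)) * (-1))
        * (n.descFactorial (j+1) : ℝ) * t ^ (n - (j+1))) m]
    simp [Nat.choose_succ_self]
    ring
  linear_combination e1

lemma lagP_n_eq (n : ℕ) (t : ℝ) : lagP n n t = (n.factorial : ℝ) * lagL n t := by
  unfold lagP lagL
  rw [Finset.mul_sum]
  rw [← Finset.sum_range_reflect (fun j => (n.choose j : ℝ) * (-1) ^ (n - j)
      * (n.descFactorial j : ℝ) * t ^ (n - j)) (n+1)]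
  refine Finset.sum_congr rfl fun k hk => ?_
  rw [Finset.mem_range] at hk
  have hkn : k ≤ n := Nat.lt_succ_iff.mp hk
  have h1 : n + 1 - 1 - k = n - k := by omega
  have h2 : n - (n - k) = k := by omega
  rw [h1]
  have hsub : n - (n - k) = k := by omega
  have h3 : Nat.factorial k * n.descFactorial (n - k) = Nat.factorial n := by
    have := Nat.factorial_mul_descFactorial (Nat.sub_le n k)
    rwa [hsub] at this
  have h5 : (Nat.factorial k : ℝ) ≠ 0 := Nat.cast_ne_zero.mpr (Nat.factorial_ne_zero _)
  have h3' : (Nat.factorial k : ℝ) * (n.descFactorial (n - k) : ℝ) = (Nat.factorial n : ℝ) := by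
    exact_mod_cast h3
  rw [hsub]
  field_simp
  rw [← h3']
  ring

section Analysis

open Filter Topology Complex

variable {z : ℂ}

/-- integrand family -/
noncomputable def lagG (n m k : ℕ) (z : ℂ) (t : ℝ) : ℂ :=
  ((Real.exp (-t) * lagP n m t : ℝ) : ℂ) / (z + t) ^ k

lemma exists_lb (hz : ∀ t : ℝ, 0 ≤ t → z + t ≠ 0) :
    ∃ ε > 0, ∀ t : ℝ, 0 ≤ t → ε ≤ ‖z + t‖ := by
  by_cases h : 0 < z.re
  · refine ⟨z.re, h, fun t ht => ?_⟩
    calc z.re ≤ (z + t).re := by simp; linarith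
    _ ≤ ‖z + t‖ := Complex.re_le_norm _
  · have him : z.im ≠ 0 := by
      intro h0
      refine hz (-z.re) (by linarith [not_lt.mp h]) ?_
      apply Complex.ext <;> simp [h0]
    refine ⟨|z.im|, abs_pos.mpr him, fun t ht => ?_⟩
    calc |z.im| = |(z + t).im| := by simp
    _ ≤ ‖z + t‖ := Complex.abs_im_le_norm _

lemma tendsto_pow_exp_half (p : ℕ) :
    Tendsto (fun t : ℝ => t ^ p * Real.exp (-(1/2) * t)) atTop (𝓝 0) := by
  have h2 : Tendsto (fun t : ℝ => t / 2) atTop atTop :=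
    tendsto_id.atTop_div_const two_pos
  have h := ((Real.tendsto_pow_mul_exp_neg_atTop_nhds_zero p).comp h2).const_mul ((2:ℝ)^p)
  rw [mul_zero] at h
  refine h.congr fun t => ?_
  simp only [Function.comp]
  rw [div_pow, show -(t/2) = -(1/2) * t by ring]
  field_simp

lemma lagP_exp_tendsto (n m : ℕ) :
    Tendsto (fun t => lagP n m t * Real.exp (-(1/2) * t)) atTop (𝓝 0) := by
  have : (fun t => lagP n m t * Real.exp (-(1/2) * t))
      = fun t => ∑ j ∈ Finset.range (m+1),
          ((m.choose j : ℝ) * (-1) ^ (m - j) * (n.descFactorial j : ℝ))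
            * (t ^ (n - j) * Real.exp (-(1/2) * t)) := by
    funext t
    rw [lagP, Finset.sum_mul]
    exact Finset.sum_congr rfl fun j _ => by ring
  rw [this]
  have h := tendsto_finset_sum (Finset.range (m+1))
    (fun j (_ : j ∈ Finset.range (m+1)) => (tendsto_pow_exp_half (n-j)).const_mul
      ((m.choose j : ℝ) * (-1) ^ (m - j) * (n.descFactorial j : ℝ)))
  simpa using h

lemma lagP_continuous (n m : ℕ) : Continuous (fun t => lagP n m t) := by
  unfold lagP
  exact continuous_finset_sum _ fun j _ => continuous_const.mul (continuous_pow (n-j))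

lemma lagG_norm_le {ε : ℝ} (hε : 0 < ε) (hlb : ∀ t : ℝ, 0 ≤ t → ε ≤ ‖z + t‖)
    (n m k : ℕ) {t : ℝ} (ht : 0 ≤ t) :
    ‖lagG n m k z t‖ ≤ ε⁻¹ ^ k *
      (‖lagP n m t * Real.exp (-(1/2) * t)‖ * Real.exp (-(1/2) * t)) := by
  have hzt : (0:ℝ) < ‖z + t‖ := lt_of_lt_of_le hε (hlb t ht)
  have h1 : ‖lagG n m k z t‖
      = (Real.exp (-t) * |lagP n m t|) / (‖z + t‖) ^ k := by
    rw [lagG, norm_div, norm_pow, Complex.norm_real, Real.norm_eq_abs, abs_mul,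
      _root_.abs_of_pos (Real.exp_pos _)]
  rw [h1]
  have h2 : Real.exp (-t) * |lagP n m t|
      = ‖lagP n m t * Real.exp (-(1/2) * t)‖ * Real.exp (-(1/2) * t) := by
    rw [Real.norm_eq_abs, abs_mul, abs_of_pos (Real.exp_pos _)]
    rw [show (-t) = -(1/2)*t + -(1/2)*t by ring, Real.exp_add]
    ring
  rw [h2, div_eq_mul_inv]
  have hbound : (‖z + t‖ ^ k)⁻¹ ≤ ε⁻¹ ^ k := by
    rw [← inv_pow]
    exact pow_le_pow_left₀ (inv_nonneg.mpr hzt.le)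
      ((inv_le_inv₀ hzt hε).mpr (hlb t ht)) k
  calc ‖lagP n m t * Real.exp (-(1/2) * t)‖ * Real.exp (-(1/2) * t)
        * (‖z + t‖ ^ k)⁻¹
      ≤ ‖lagP n m t * Real.exp (-(1/2) * t)‖ * Real.exp (-(1/2) * t) * ε⁻¹ ^ k := by
        apply mul_le_mul_of_nonneg_left hbound
        positivity
    _ = ε⁻¹ ^ k * (‖lagP n m t * Real.exp (-(1/2) * t)‖ * Real.exp (-(1/2) * t)) := by
        ring

lemma lagG_continuousOn (hz : ∀ t : ℝ, 0 ≤ t → z + t ≠ 0) (n m k : ℕ) :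
    ContinuousOn (lagG n m k z) (Ici 0) := by
  apply ContinuousOn.div
  · exact (Complex.continuous_ofReal.comp
      ((Real.continuous_exp.comp continuous_neg).mul (lagP_continuous n m))).continuousOn
  · exact ((continuous_const.add Complex.continuous_ofReal).pow k).continuousOn
  · exact fun t ht => pow_ne_zero _ (hz t ht)

lemma lagG_integrableOn (hz : ∀ t : ℝ, 0 ≤ t → z + t ≠ 0) (n m k : ℕ) :
    IntegrableOn (lagG n m k z) (Ioi 0) := by
  obtain ⟨ε, hε, hlb⟩ := exists_lb hz
  have hcont := lagG_continuousOn hz n m k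
  have hnormO : (fun t => ‖lagG n m k z t‖) =O[atTop] fun t => Real.exp (-(1/2) * t) := by
    rw [Asymptotics.isBigO_iff]
    refine ⟨ε⁻¹ ^ k, ?_⟩
    have h1 := Metric.tendsto_nhds.mp (lagP_exp_tendsto n m) 1 one_pos
    filter_upwards [eventually_ge_atTop (0:ℝ), h1] with t ht hPt
    rw [dist_zero_right] at hPt
    have := lagG_norm_le hε hlb n m k ht
    simp only [Real.norm_eq_abs]
    rw [_root_.abs_of_nonneg (norm_nonneg _), _root_.abs_of_nonneg (Real.exp_pos _).le]
    calc ‖lagG n m k z t‖ ≤ ε⁻¹ ^ k *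
        (‖lagP n m t * Real.exp (-(1/2) * t)‖ * Real.exp (-(1/2) * t)) := this
    _ ≤ ε⁻¹ ^ k * (1 * Real.exp (-(1/2) * t)) :=
        mul_le_mul_of_nonneg_left
          (mul_le_mul_of_nonneg_right hPt.le (Real.exp_pos _).le) (by positivity)
    _ = ε⁻¹ ^ k * Real.exp (-(1/2) * t) := by ring
  have hnorm_int : IntegrableOn (fun t => ‖lagG n m k z t‖) (Ioi 0) := by
    refine integrable_of_isBigO_exp_neg (by norm_num : (0:ℝ) < 1/2) hcont.norm ?_
    simpa using hnormO
  refine hnorm_int.mono' ?_ (ae_of_all _ fun t => le_refl _)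
  exact (hcont.mono Ioi_subset_Ici_self).aestronglyMeasurable measurableSet_Ioi

lemma lagG_tendsto_atTop (hz : ∀ t : ℝ, 0 ≤ t → z + t ≠ 0) (n m k : ℕ) :
    Tendsto (lagG n m k z) atTop (𝓝 0) := by
  obtain ⟨ε, hε, hlb⟩ := exists_lb hz
  refine squeeze_zero_norm' (a := fun t => ε⁻¹ ^ k *
      (‖lagP n m t * Real.exp (-(1/2) * t)‖ * Real.exp (-(1/2) * t))) ?_ ?_
  · filter_upwards [eventually_ge_atTop (0:ℝ)] with t ht
    exact lagG_norm_le hε hlb n m k ht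
  · have h1 : Tendsto (fun t => Real.exp (-(1/2) * t)) atTop (𝓝 0) := by
      simpa using tendsto_pow_exp_half 0
    have := ((lagP_exp_tendsto n m).norm.mul h1).const_mul (ε⁻¹ ^ k)
    simpa using this

lemma lagG_ibp (hz : ∀ t : ℝ, 0 ≤ t → z + t ≠ 0) (n m k : ℕ) (hm : m < n) :
    ∫ t in Ioi (0:ℝ), lagG n (m+1) (k+1) z t
      = (k+1 : ℂ) * ∫ t in Ioi (0:ℝ), lagG n m (k+2) z t := by
  set f : ℝ → ℂ := fun t => ((Real.exp (-t) * lagP n m t : ℝ) : ℂ) * ((z + t) ^ (k+1))⁻¹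
  set f' : ℝ → ℂ := fun t =>
    lagG n (m+1) (k+1) z t - (k+1 : ℂ) * lagG n m (k+2) z t with hf'
  have hderiv : ∀ t ∈ Ici (0:ℝ), HasDerivAt f (f' t) t := by
    intro t ht
    have hzt : z + t ≠ 0 := hz t ht
    have hu : HasDerivAt (fun t => Real.exp (-t) * lagP n m t)
        (Real.exp (-t) * lagP n (m+1) t) t := by
      have h1 : HasDerivAt (fun t : ℝ => Real.exp (-t)) (-Real.exp (-t)) t := by
        simpa using (hasDerivAt_neg' (x := t)).exp
      have h2 : HasDerivAt (fun t => lagP n m t)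
          (∑ j ∈ Finset.range (m + 1),
            (m.choose j : ℝ) * (-1) ^ (m - j) * (n.descFactorial j : ℝ)
              * (((n - j : ℕ) : ℝ) * t ^ (n - j - 1))) t := by
        unfold lagP
        exact HasDerivAt.fun_sum fun j _ => (hasDerivAt_pow (n-j) t).const_mul _
      have h3 := h1.mul h2
      have heq : -Real.exp (-t) * lagP n m t + Real.exp (-t) *
          (∑ j ∈ Finset.range (m + 1),
            (m.choose j : ℝ) * (-1) ^ (m - j) * (n.descFactorial j : ℝ)
              * (((n - j : ℕ) : ℝ) * t ^ (n - j - 1)))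
          = Real.exp (-t) * lagP n (m+1) t := by
        rw [lagP_succ_eq hm]
        ring
      rw [← heq]
      exact h3
    have hU : HasDerivAt (fun t : ℝ => ((Real.exp (-t) * lagP n m t : ℝ) : ℂ))
        ((Real.exp (-t) * lagP n (m+1) t : ℝ) : ℂ) t := hu.ofReal_comp
    have hwc : HasDerivAt (fun w : ℂ => (z + w) ^ (k+1))
        (((k+1 : ℕ) : ℂ) * (z + (t:ℂ)) ^ (k + 1 - 1) * 1) ((t:ℝ) : ℂ) :=
      ((hasDerivAt_id ((t:ℝ):ℂ)).const_add z).fun_pow (k+1)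
    have hpow : HasDerivAt (fun t : ℝ => (z + (t:ℂ)) ^ (k+1))
        (((k+1 : ℕ) : ℂ) * (z + t) ^ (k + 1 - 1) * 1) t := hwc.comp_ofReal
    have hV : HasDerivAt (fun t : ℝ => ((z + (t:ℂ)) ^ (k+1))⁻¹)
        (-((k+1 : ℂ)) * ((z + t) ^ (k+2))⁻¹) t := by
      have h4 := (hwc.inv (pow_ne_zero _ hzt)).comp_ofReal
      have heq : -(((k+1 : ℕ) : ℂ) * (z + t) ^ (k + 1 - 1) * 1) / ((z + t) ^ (k+1)) ^ 2
          = -((k+1 : ℂ)) * ((z + t) ^ (k+2))⁻¹ := by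
        rw [show k + 1 - 1 = k from rfl]
        push_cast
        field_simp
        ring
      rwa [heq] at h4
    have h5 := hU.mul hV
    have heq2 : ((Real.exp (-t) * lagP n (m+1) t : ℝ) : ℂ) * ((z + t) ^ (k+1))⁻¹
        + ((Real.exp (-t) * lagP n m t : ℝ) : ℂ) * (-((k+1 : ℂ)) * ((z + t) ^ (k+2))⁻¹)
        = f' t := by
      rw [hf']
      unfold lagG
      simp only [div_eq_mul_inv]
      ring
    rw [← heq2]
    exact h5
  have hint1 := lagG_integrableOn hz n (m+1) (k+1)
  have hint2 := lagG_integrableOn hz n m (k+2)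
  have hf'int : IntegrableOn f' (Ioi 0) := hint1.sub (hint2.const_mul _)
  have htends : Tendsto f atTop (𝓝 0) := by
    have := lagG_tendsto_atTop hz n m (k+1)
    refine this.congr fun t => ?_
    rw [lagG, div_eq_mul_inv]
  have hFTC := integral_Ioi_of_hasDerivAt_of_tendsto' hderiv hf'int htends
  have hf0 : f 0 = 0 := by
    simp [f, lagP_eval_zero hm]
  rw [hf0, sub_zero] at hFTC
  have hsplit : ∫ t in Ioi (0:ℝ), f' t
      = (∫ t in Ioi (0:ℝ), lagG n (m+1) (k+1) z t)
        - (k+1 : ℂ) * ∫ t in Ioi (0:ℝ), lagG n m (k+2) z t := by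
    rw [hf']
    rw [integral_sub hint1 (hint2.const_mul _), integral_const_mul]
  rw [hsplit] at hFTC
  linear_combination hFTC

lemma lagG_key (hz : ∀ t : ℝ, 0 ≤ t → z + t ≠ 0) (n : ℕ) :
    ∀ k, k ≤ n → ∫ t in Ioi (0:ℝ), lagG n n 1 z t
      = (k.factorial : ℂ) * ∫ t in Ioi (0:ℝ), lagG n (n-k) (k+1) z t := by
  intro k
  induction k with
  | zero => intro _; simp
  | succ k ih =>
    intro hk
    have hk' : k ≤ n := by omega
    rw [ih hk']
    have hm : n - (k+1) < n := by omega
    have hm1 : n - (k+1) + 1 = n - k := by omega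
    have := lagG_ibp hz n (n - (k+1)) k hm
    rw [hm1] at this
    rw [this, Nat.factorial_succ]
    push_cast
    ring

end Analysis

theorem lagAlpha_integral_formula (a : ℂ) (ha : ∀ x : ℝ, x ≤ 0 → a ≠ (x : ℂ)) (n : ℕ) :
    lagAlpha n 1 a
      = ∫ ξ in Ioi (0:ℝ), (ξ:ℂ) ^ n * Complex.exp (-(ξ:ℂ)) / (2 * a + (ξ:ℂ)) ^ (n + 1) := by
  set z : ℂ := 2 * a with hzdef
  have hz : ∀ t : ℝ, 0 ≤ t → z + t ≠ 0 := by
    intro t ht h0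
    refine ha (-(t/2)) (by linarith) ?_
    push_cast
    linear_combination h0 / 2
  set Hf : ℝ → ℂ := fun t => ((Real.exp (-t) * lagL n t : ℝ) : ℂ) / (z + t) with hHf
  have step1 : lagAlpha n 1 a = ∫ ξ in Ioi (0:ℝ), 2 * Hf (2 * ξ) := by
    unfold lagAlpha lagPhi
    refine setIntegral_congr_fun measurableSet_Ioi fun ξ hξ => ?_
    have hξ0 : (0:ℝ) ≤ ξ := (le_of_lt hξ)
    have hne : z + (2*ξ : ℝ) ≠ 0 := hz (2*ξ) (by linarith)
    have hne' : a + (ξ:ℂ) ≠ 0 := by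
      intro h0
      apply hne
      push_cast
      rw [hzdef]
      linear_combination 2 * h0
    rw [hHf]
    simp only
    push_cast
    rw [show -(2 * (ξ:ℂ)) = -ξ + -ξ by ring, Complex.exp_add]
    rw [show z + 2 * (ξ:ℂ) = 2 * (a + ξ) by rw [hzdef]; ring]
    rw [pow_one]
    field_simp
  have step2 : ∫ ξ in Ioi (0:ℝ), 2 * Hf (2 * ξ) = ∫ t in Ioi (0:ℝ), Hf t := by
    rw [integral_const_mul]
    rw [integral_comp_mul_left_Ioi Hf 0 two_pos]
    rw [mul_zero, Complex.real_smul]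
    push_cast
    ring
  have step3 : ∫ t in Ioi (0:ℝ), Hf t
      = ((n.factorial : ℂ))⁻¹ * ∫ t in Ioi (0:ℝ), lagG n n 1 z t := by
    rw [← integral_const_mul]
    refine setIntegral_congr_fun measurableSet_Ioi fun t ht => ?_
    rw [hHf]
    simp only
    unfold lagG
    have hfac : ((n.factorial : ℂ)) ≠ 0 := by
      exact_mod_cast Nat.cast_ne_zero.mpr (Nat.factorial_ne_zero n)
    rw [lagP_n_eq, pow_one, eq_comm, inv_mul_eq_iff_eq_mul₀ hfac, ← mul_div_assoc]
    congr 1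
    push_cast
    ring
  have step4 := lagG_key hz n n le_rfl
  rw [Nat.sub_self] at step4
  have step5 : ∫ t in Ioi (0:ℝ), lagG n 0 (n+1) z t
      = ∫ ξ in Ioi (0:ℝ), (ξ:ℂ) ^ n * Complex.exp (-(ξ:ℂ)) / (2 * a + (ξ:ℂ)) ^ (n + 1) := by
    refine setIntegral_congr_fun measurableSet_Ioi fun t ht => ?_
    unfold lagG
    rw [lagP_zero, ← hzdef]
    rw [show Complex.exp (-(t:ℂ)) = ((Real.exp (-t) : ℝ) : ℂ) by
      rw [Complex.ofReal_exp]; push_cast; ring_nf]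
    push_cast
    ring
  rw [step1, step2, step3, step4, step5]
  have hfac : ((n.factorial : ℂ)) ≠ 0 := by
    exact_mod_cast Nat.cast_ne_zero.mpr (Nat.factorial_ne_zero n)
  field_simp
  rw [hzdef]
end
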